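/- arXiv:1409.7845 — 5 statements merged into one kernel-verified Lean document; each statement's English description precedes it below -/
import Mathlib

section
/- Let r, g_R be probability vectors on Fin d and s, g_S probability vectors on Fin d', with g_R and g_S strictly positive. Then there exists a column-stochastic matrix M on the index set Fin d × Fin d' with M (g_R ⊗ g_S) = g_R ⊗ g_S and M (r ⊗ g_S) = g_R ⊗ s if and only if the rescaled Lorenz curve of r ⊗ g_S relative to g_R ⊗ g_S lies nowhere below the rescaled Lorenz curve of g_R ⊗ s relative to g_R ⊗ g_S, i.e. L_{r⊗g_S | g_R⊗g_S}(x) ≥ L_{g_R⊗s | g_R⊗g_S}(x) for all x ∈ [0,1]. -/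
open Finset Real Filter

/-- A probability vector on a finite index set. -/
def IsProbVec {ι : Type*} [Fintype ι] (r : ι → ℝ) : Prop :=
  (∀ i, 0 ≤ r i) ∧ ∑ i, r i = 1

/-- A column-stochastic matrix: nonnegative entries, each column sums to 1. -/
def ColStochastic {ι κ : Type*} [Fintype ι] [Fintype κ] (M : Matrix κ ι ℝ) : Prop :=
  (∀ i j, 0 ≤ M i j) ∧ ∀ j, ∑ i, M i j = 1

/-- Tensor product of vectors. -/
def tens {ι κ : Type*} (r : ι → ℝ) (s : κ → ℝ) : ι × κ → ℝ := fun p => r p.1 * s p.2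

/-- n-fold tensor power of a vector on `Fin d`. -/
def tensPow {d : ℕ} (r : Fin d → ℝ) (n : ℕ) : (Fin n → Fin d) → ℝ :=
  fun f => ∏ k, r (f k)

/-- Relative entropy `D(r ‖ g)` (natural logarithm; `0 * log 0 = 0` holds by convention). -/
noncomputable def relEnt {ι : Type*} [Fintype ι] (r g : ι → ℝ) : ℝ :=
  ∑ i, r i * (Real.log (r i) - Real.log (g i))

/-- Optimal type-II error in hypothesis testing between `r` and `g`. -/
noncomputable def bEps {ι : Type*} [Fintype ι] (ε : ℝ) (r g : ι → ℝ) : ℝ :=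
  sInf {y | ∃ Q : ι → ℝ, (∀ i, 0 ≤ Q i ∧ Q i ≤ 1) ∧ 1 - ε ≤ ∑ i, Q i * r i ∧
    y = ∑ i, Q i * g i}

/-- Hypothesis-testing relative entropy. -/
noncomputable def DH {ι : Type*} [Fintype ι] (ε : ℝ) (r g : ι → ℝ) : ℝ :=
  - Real.log (bEps ε r g)

/-- Partial sums of `v` along the ordering `e`. -/
noncomputable def cumul {ι : Type*} [Fintype ι] (v : ι → ℝ)
    (e : Fin (Fintype.card ι) ≃ ι) (m : ℕ) : ℝ :=
  ∑ α ∈ Finset.univ.filter (fun α : Fin (Fintype.card ι) => (α : ℕ) < m), v (e α)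

/-- `L` is the rescaled Lorenz curve of `r` relative to `g`: indices are ordered so that the
ratios `r/g` are nonincreasing, and `L` linearly interpolates the cumulative points. -/
def IsLorenzCurveOf {ι : Type*} [Fintype ι] (r g : ι → ℝ) (L : ℝ → ℝ) : Prop :=
  ∃ e : Fin (Fintype.card ι) ≃ ι,
    (∀ a b : Fin (Fintype.card ι), a ≤ b → r (e b) / g (e b) ≤ r (e a) / g (e a)) ∧
    ∀ m : Fin (Fintype.card ι), ∀ x : ℝ,
      cumul g e (m : ℕ) ≤ x → x ≤ cumul g e ((m : ℕ) + 1) →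
      L x = cumul r e (m : ℕ) + (x - cumul g e (m : ℕ)) * (r (e m) / g (e m))

/-- Gibbs state of a two-level battery with gap `W` at inverse temperature `β`. -/
noncomputable def gibbsBit (β W : ℝ) : Fin 2 → ℝ :=
  fun k => (1 / (1 + Real.exp (-β * W))) * (if k = 0 then 1 else Real.exp (-β * W))

/-- Battery ground state `(1,0)`. -/
def groundBit : Fin 2 → ℝ := fun k => if k = 0 then 1 else 0

/-- Battery excited state `(0,1)`. -/
def excitedBit : Fin 2 → ℝ := fun k => if k = 0 then 0 else 1

/-- `W` units of work are ε-extractable from `r` relative to the equilibrium state `g`. -/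
def ExtractableWork {ι : Type*} [Fintype ι] (β : ℝ) (g r : ι → ℝ) (ε W : ℝ) : Prop :=
  0 ≤ W ∧ ∃ M : Matrix (ι × Fin 2) (ι × Fin 2) ℝ, ColStochastic M ∧
    M.mulVec (tens g (gibbsBit β W)) = tens g (gibbsBit β W) ∧
    (1/2) * ∑ k, |(∑ i, M.mulVec (tens r groundBit) (i, k)) - excitedBit k| ≤ ε

/-- One-shot ε-work yield. -/
noncomputable def Wgain {ι : Type*} [Fintype ι] (β : ℝ) (g r : ι → ℝ) (ε : ℝ) : ℝ :=
  sSup {W | ExtractableWork β g r ε W}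

/-- `W` units of work ε-suffice to create `r` relative to the equilibrium state `g`. -/
def FormationWork {ι : Type*} [Fintype ι] (β : ℝ) (g r : ι → ℝ) (ε W : ℝ) : Prop :=
  0 ≤ W ∧ ∃ M : Matrix (ι × Fin 2) (ι × Fin 2) ℝ, ∃ rt : ι → ℝ, ColStochastic M ∧
    M.mulVec (tens g (gibbsBit β W)) = tens g (gibbsBit β W) ∧
    IsProbVec rt ∧ (1/2) * ∑ i, |rt i - r i| ≤ ε ∧
    M.mulVec (tens g excitedBit) = tens rt groundBit

/-- One-shot ε-work cost. -/
noncomputable def Wcost {ι : Type*} [Fintype ι] (β : ℝ) (g r : ι → ℝ) (ε : ℝ) : ℝ :=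
  sInf {W | FormationWork β g r ε W}

noncomputable section EqMajAux

/-- Cumulative sums. -/
def Gc (gN : ℕ → ℝ) (k : ℕ) : ℝ := ∑ i ∈ Finset.range k, gN i

/-- Lorenz curve of a mass/value list. -/
def Lam (N : ℕ) (gN vN : ℕ → ℝ) (x : ℝ) : ℝ :=
  ∑ i ∈ Finset.range N, vN i * (min x (Gc gN (i+1)) - min x (Gc gN i))

lemma Gc_zero (gN : ℕ → ℝ) : Gc gN 0 = 0 := by simp [Gc]

lemma Gc_succ (gN : ℕ → ℝ) (k : ℕ) : Gc gN (k+1) = Gc gN k + gN k :=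
  Finset.sum_range_succ _ _

lemma Gc_mono {gN : ℕ → ℝ} (hg : ∀ i, 0 ≤ gN i) : Monotone (Gc gN) :=
  monotone_nat_of_le_succ (fun k => by rw [Gc_succ]; linarith [hg k])

lemma delta_nonneg {gN : ℕ → ℝ} (hg : ∀ i, 0 ≤ gN i) (x : ℝ) (i : ℕ) :
    0 ≤ min x (Gc gN (i+1)) - min x (Gc gN i) := by
  have := Gc_mono hg (Nat.le_succ i)
  have : min x (Gc gN i) ≤ min x (Gc gN (i+1)) := min_le_min le_rfl this
  linarith

lemma delta_le {gN : ℕ → ℝ} (hg : ∀ i, 0 ≤ gN i) (x : ℝ) (i : ℕ) :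
    min x (Gc gN (i+1)) - min x (Gc gN i) ≤ gN i := by
  rw [Gc_succ]
  rcases le_total x (Gc gN i) with h | h
  · rw [min_eq_left h, min_eq_left (by linarith [hg i])]; linarith [hg i]
  · rw [min_eq_right h]
    have : min x (Gc gN i + gN i) ≤ Gc gN i + gN i := min_le_right _ _
    linarith

lemma sum_delta (gN : ℕ → ℝ) (N : ℕ) (x : ℝ) :
    ∑ i ∈ Finset.range N, (min x (Gc gN (i+1)) - min x (Gc gN i))
      = min x (Gc gN N) - min x 0 := by
  have := Finset.sum_range_sub (fun k => min x (Gc gN k)) N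
  simpa [Gc_zero] using this

lemma sum_delta' (gN : ℕ → ℝ) (N : ℕ) {x : ℝ} (hx0 : 0 ≤ x) (hxN : x ≤ Gc gN N) :
    ∑ i ∈ Finset.range N, (min x (Gc gN (i+1)) - min x (Gc gN i)) = x := by
  rw [sum_delta, min_eq_left hxN, min_eq_right hx0]; ring

lemma lam_sub_eq (N : ℕ) (gN vN : ℕ → ℝ) {x : ℝ} (hx0 : 0 ≤ x) (hxN : x ≤ Gc gN N) (c : ℝ) :
    Lam N gN vN x - c * x
      = ∑ i ∈ Finset.range N, (vN i - c) * (min x (Gc gN (i+1)) - min x (Gc gN i)) := by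
  have h := sum_delta' gN N hx0 hxN
  rw [Lam]
  rw [show (∑ i ∈ Finset.range N, (vN i - c) * (min x (Gc gN (i+1)) - min x (Gc gN i)))
      = (∑ i ∈ Finset.range N, vN i * (min x (Gc gN (i+1)) - min x (Gc gN i)))
        - c * (∑ i ∈ Finset.range N, (min x (Gc gN (i+1)) - min x (Gc gN i))) by
    rw [Finset.mul_sum, ← Finset.sum_sub_distrib]; congr 1; ext i; ring]
  rw [h]

/-- (L2): the Lorenz curve is below every supporting line. -/
lemma lam_le (N : ℕ) (gN vN : ℕ → ℝ) (hg : ∀ i, 0 ≤ gN i)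
    {x : ℝ} (hx0 : 0 ≤ x) (hxN : x ≤ Gc gN N) (c : ℝ) :
    Lam N gN vN x ≤ (∑ i ∈ Finset.range N, gN i * max (vN i - c) 0) + c * x := by
  have h := lam_sub_eq N gN vN hx0 hxN c
  have hb : ∀ i ∈ Finset.range N,
      (vN i - c) * (min x (Gc gN (i+1)) - min x (Gc gN i)) ≤ gN i * max (vN i - c) 0 := by
    intro i _
    have h1 : (vN i - c) * (min x (Gc gN (i+1)) - min x (Gc gN i))
        ≤ max (vN i - c) 0 * (min x (Gc gN (i+1)) - min x (Gc gN i)) :=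
      mul_le_mul_of_nonneg_right (le_max_left _ _) (delta_nonneg hg x i)
    have h2 : max (vN i - c) 0 * (min x (Gc gN (i+1)) - min x (Gc gN i))
        ≤ max (vN i - c) 0 * gN i :=
      mul_le_mul_of_nonneg_left (delta_le hg x i) (le_max_right _ _)
    calc _ ≤ _ := h1
      _ ≤ _ := h2
      _ = gN i * max (vN i - c) 0 := mul_comm _ _
  have := Finset.sum_le_sum hb
  linarith [h ▸ this]

/-- (L3): attainment of the supporting line, for sorted values. -/
lemma lam_att (N : ℕ) (gN vN : ℕ → ℝ) (hg : ∀ i, 0 ≤ gN i)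
    (hv : ∀ i j, i ≤ j → j < N → vN j ≤ vN i)
    {x : ℝ} (hx0 : 0 ≤ x) (hxN : x ≤ Gc gN N) :
    ∃ c, Lam N gN vN x = (∑ i ∈ Finset.range N, gN i * max (vN i - c) 0) + c * x := by
  classical
  rcases Nat.eq_zero_or_pos N with hN | hN
  · subst hN
    have hx : x = 0 := le_antisymm (by simpa [Gc_zero] using hxN) hx0
    exact ⟨0, by simp [Lam, hx]⟩
  set P : ℕ → Prop := fun k => Gc gN k ≤ x with hP
  have hP0 : P 0 := by simp [hP, Gc_zero, hx0]
  set k := Nat.findGreatest P (N-1) with hkdef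
  have hk1 : Gc gN k ≤ x := Nat.findGreatest_spec (Nat.zero_le _) hP0
  have hkN : k < N := lt_of_le_of_lt (Nat.findGreatest_le _) (by omega)
  have hk2 : x ≤ Gc gN (k+1) := by
    rcases lt_or_ge k (N-1) with h | h
    · by_contra hlt
      push_neg at hlt
      exact (Nat.findGreatest_is_greatest (P := P) (n := N-1) (k := k+1) (by omega) (by omega)) (le_of_lt hlt)
    · have hkeq : k + 1 = N := by omega
      rw [hkeq]; exact hxN
  refine ⟨vN k, ?_⟩
  have key : ∀ i ∈ Finset.range N,
      (vN i - vN k) * (min x (Gc gN (i+1)) - min x (Gc gN i))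
        = gN i * max (vN i - vN k) 0 := by
    intro i hi
    rw [Finset.mem_range] at hi
    rcases lt_trichotomy i k with h | h | h
    · -- i < k
      have hle : Gc gN (i+1) ≤ x := le_trans (Gc_mono hg (by omega)) hk1
      have hle' : Gc gN i ≤ x := le_trans (Gc_mono hg (by omega)) hk1
      rw [min_eq_right hle, min_eq_right hle', Gc_succ]
      have hvv : vN k ≤ vN i := hv i k (le_of_lt h) hkN
      rw [max_eq_left (by linarith)]
      ring
    · subst h; simp
    · -- k < i
      have hge : x ≤ Gc gN i := le_trans hk2 (Gc_mono hg (by omega))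
      have hge' : x ≤ Gc gN (i+1) := le_trans hge (Gc_mono hg (Nat.le_succ i))
      rw [min_eq_left hge, min_eq_left hge']
      have hvv : vN i ≤ vN k := hv k i (le_of_lt h) hi
      rw [max_eq_right (by linarith)]
      ring
  have h := lam_sub_eq N gN vN hx0 hxN (vN k)
  rw [Finset.sum_congr rfl key] at h
  linarith

lemma lam_continuous (N : ℕ) (gN vN : ℕ → ℝ) : Continuous (Lam N gN vN) := by
  apply continuous_finset_sum
  intro i _
  exact continuous_const.mul ((continuous_id.min continuous_const).sub
    (continuous_id.min continuous_const))

end EqMajAux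

lemma theta_min_left {u h t y : ℝ} (hh : 0 ≤ h) (hy : y ≤ u) :
    min y (t - min (u+h) t + min u t) = min y t := by
  simp only [min_def]; split_ifs <;> linarith

lemma theta_min_right {u h t y : ℝ} (hh : 0 ≤ h) (hy : u ≤ y) :
    min y (t - min (u+h) t + min u t)
      = (min (y+h) t) - min (u+h) (min (y+h) t) + min u (min (y+h) t) := by
  simp only [min_def]; split_ifs <;> linarith

lemma delta_mono' {x x' a bb : ℝ} (hb : bb ≤ a) (hx : x ≤ x') :
    min x a - min x bb ≤ min x' a - min x' bb := by
  simp only [min_def]; split_ifs <;> linarith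

lemma min_min_right {a y t : ℝ} (hay : a ≤ y) : min a (min y t) = min a t := by
  rw [← min_assoc, min_eq_left hay]

lemma lam_zero (N : ℕ) (gN vN : ℕ → ℝ) (hg : ∀ i, 0 ≤ gN i) : Lam N gN vN 0 = 0 := by
  unfold Lam
  apply Finset.sum_eq_zero
  intro i _
  have h1 : (0:ℝ) ≤ Gc gN (i+1) := by
    have := Gc_mono hg (Nat.zero_le (i+1)); simpa [Gc_zero] using this
  have h2 : (0:ℝ) ≤ Gc gN i := by
    have := Gc_mono hg (Nat.zero_le i); simpa [Gc_zero] using this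
  rw [min_eq_left h1, min_eq_left h2]; ring

lemma main_coupling (n : ℕ) :
    ∀ {ι : Type} [Fintype ι] (ρ g : ι → ℝ) (b σ : Fin n → ℝ),
    (∀ i, 0 ≤ g i) → (∀ j, 0 ≤ b j) → (∀ j k : Fin n, j ≤ k → σ k ≤ σ j) →
    ((∑ i, g i) = ∑ j, b j) → ((∑ i, g i * ρ i) = ∑ j, b j * σ j) →
    (∀ c : ℝ, (∑ j, b j * max (σ j - c) 0) ≤ ∑ i, g i * max (ρ i - c) 0) →
    ∃ PP : Fin n → ι → ℝ, (∀ j i, 0 ≤ PP j i) ∧ (∀ i, ∑ j, PP j i = g i) ∧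
      (∀ j, ∑ i, PP j i = b j) ∧ (∀ j, ∑ i, PP j i * ρ i = b j * σ j) := by
  induction n with
  | zero =>
    intro ι _ ρ g b σ hg hb hσ hT hTρ hEm
    refine ⟨fun _ _ => 0, by simp, ?_, by simp, by simp⟩
    intro i
    have hzero : ∑ i, g i = 0 := by rw [hT]; simp
    have := (Finset.sum_eq_zero_iff_of_nonneg (fun i _ => hg i)).mp hzero i (Finset.mem_univ i)
    simp [this]
  | succ n IH =>
    intro ι _ ρ g b σ hg hb hσ hT hTρ hEm
    classical
    set N := Fintype.card ι with hNdef
    set e0 := Fintype.equivFin ι with he0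
    set f : Fin N → ℝ := fun k => -ρ (e0.symm k) with hf
    set e : Fin N ≃ ι := (Tuple.sort f).trans e0.symm with he
    have hsorte : ∀ a c : Fin N, a ≤ c → ρ (e c) ≤ ρ (e a) := by
      intro a c hac
      have := Tuple.monotone_sort f hac
      simp only [Function.comp_apply, hf] at this
      have : -ρ (e0.symm (Tuple.sort f a)) ≤ -ρ (e0.symm (Tuple.sort f c)) := this
      simpa [he] using this
    set gN : ℕ → ℝ := fun i => if hi : i < N then g (e ⟨i, hi⟩) else 0 with hgNdef
    set vN : ℕ → ℝ := fun i => if hi : i < N then ρ (e ⟨i, hi⟩) else 0 with hvNdef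
    have hgN : ∀ i, 0 ≤ gN i := by
      intro i; rw [hgNdef]; dsimp only; split
      · exact hg _
      · exact le_rfl
    have hvsort : ∀ i j, i ≤ j → j < N → vN j ≤ vN i := by
      intro i j hij hjN
      have hiN : i < N := lt_of_le_of_lt hij hjN
      rw [hvNdef]; dsimp only
      rw [dif_pos hiN, dif_pos hjN]
      exact hsorte ⟨i, hiN⟩ ⟨j, hjN⟩ hij
    have hconvF : ∀ (aN : ℕ → ℝ) (a : ι → ℝ), (∀ α : Fin N, aN ↑α = a (e α)) →
        ∀ (F : ℝ → ℝ → ℝ), (∑ i ∈ Finset.range N, F (aN i) (vN i)) = ∑ i, F (a i) (ρ i) := by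
      intro aN a ha F
      rw [← Fin.sum_univ_eq_sum_range (fun i => F (aN i) (vN i)) N]
      rw [← Equiv.sum_comp e (fun i => F (a i) (ρ i))]
      apply Finset.sum_congr rfl
      intro α _
      rw [ha α]
      congr 1
      simp [hvNdef, α.isLt]
    have hgNa : ∀ α : Fin N, gN ↑α = g (e α) := by
      intro α; simp [hgNdef, α.isLt]
    have hconv := hconvF gN g hgNa
    set T : ℝ := ∑ i, g i with hTdef
    have hGcN : Gc gN N = T := by
      rw [hTdef]; rw [← hconv (fun a _ => a)]; rfl
    set hl : ℝ := b (Fin.last n) with hhl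
    set σm : ℝ := σ (Fin.last n) with hσm
    have hl0 : 0 ≤ hl := hb _
    have hlT : hl ≤ T := by
      rw [hT, hhl]
      exact Finset.single_le_sum (fun j _ => hb j) (Finset.mem_univ (Fin.last n))
    -- the key lower bound on the Lorenz curve
    have key_lb : ∀ (A : Finset (Fin (n+1))) (x : ℝ), 0 ≤ x → x ≤ T →
        ((∑ j ∈ A, b j) = x) → (∑ j ∈ A, b j * σ j) ≤ Lam N gN vN x := by
      intro A x hx0 hxT hA
      obtain ⟨c₂, hc₂⟩ := lam_att N gN vN hgN hvsort hx0 (by rw [hGcN]; exact hxT)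
      have h1 : ∑ j ∈ A, b j * σ j = (∑ j ∈ A, b j * (σ j - c₂)) + c₂ * x := by
        rw [← hA, Finset.mul_sum, ← Finset.sum_add_distrib]
        apply Finset.sum_congr rfl; intro j _; ring
      have h2 : (∑ j ∈ A, b j * (σ j - c₂)) ≤ ∑ j ∈ A, b j * max (σ j - c₂) 0 :=
        Finset.sum_le_sum (fun j _ => mul_le_mul_of_nonneg_left (le_max_left _ _) (hb j))
      have h3 : (∑ j ∈ A, b j * max (σ j - c₂) 0) ≤ ∑ j, b j * max (σ j - c₂) 0 :=
        Finset.sum_le_sum_of_subset_of_nonneg (Finset.subset_univ A)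
          (fun j _ _ => mul_nonneg (hb j) (le_max_right _ _))
      have h4 := hEm c₂
      have h5 : (∑ i, g i * max (ρ i - c₂) 0) = ∑ i ∈ Finset.range N, gN i * max (vN i - c₂) 0 :=
        (hconv (fun a v => a * max (v - c₂) 0)).symm
      rw [h1, hc₂]
      rw [h5] at h4
      linarith
    have hLamT : Lam N gN vN T = ∑ j, b j * σ j := by
      rw [← hTρ, ← hconv (fun a v => a * v)]
      unfold Lam
      apply Finset.sum_congr rfl
      intro i hi
      rw [Finset.mem_range] at hi
      have h1 : Gc gN (i+1) ≤ T := by rw [← hGcN]; exact Gc_mono hgN hi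
      have h2 : Gc gN i ≤ T := by rw [← hGcN]; exact Gc_mono hgN (le_of_lt hi)
      rw [min_eq_right h1, min_eq_right h2, Gc_succ]
      ring
    -- IVT to find the window
    set ψ : ℝ → ℝ := fun u => Lam N gN vN (u + hl) - Lam N gN vN u with hψdef
    have hψ0 : hl * σm ≥ hl * σm := le_rfl
    have hψ_at0 : hl * σm ≤ ψ 0 := by
      have := key_lb {Fin.last n} hl hl0 hlT (by simp [hhl])
      simp only [Finset.sum_singleton] at this
      rw [hψdef]; dsimp only
      rw [zero_add, lam_zero N gN vN hgN]
      rw [← hσm] at this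
      linarith
    have hψ_atT : ψ (T - hl) ≤ hl * σm := by
      have hsub : (∑ j ∈ Finset.univ.erase (Fin.last n), b j) = T - hl := by
        have h2 := Finset.sum_erase_add Finset.univ b (Finset.mem_univ (Fin.last n))
        rw [hT, hhl]; linarith
      have hkey := key_lb (Finset.univ.erase (Fin.last n)) (T - hl) (by linarith) (by linarith) hsub
      have hsub2 : (∑ j ∈ Finset.univ.erase (Fin.last n), b j * σ j)
          = (∑ j, b j * σ j) - hl * σm := by
        have h2 := Finset.sum_erase_add Finset.univ (fun j => b j * σ j) (Finset.mem_univ (Fin.last n))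
        rw [hhl, hσm]; linarith
      rw [hψdef]; dsimp only
      rw [sub_add_cancel, hLamT]
      linarith [hsub2 ▸ hkey]
    have hcont : ContinuousOn ψ (Set.Icc 0 (T - hl)) := by
      apply Continuous.continuousOn
      exact ((lam_continuous N gN vN).comp (continuous_id.add continuous_const)).sub
        (lam_continuous N gN vN)
    have hmem : hl * σm ∈ Set.Icc (ψ (T - hl)) (ψ 0) := ⟨hψ_atT, hψ_at0⟩
    obtain ⟨u, huIcc, hu⟩ := intermediate_value_Icc' (by linarith : (0:ℝ) ≤ T - hl) hcont hmem
    obtain ⟨hu0, huT⟩ := huIcc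
    -- the window masses
    set wN : ℕ → ℝ := fun i =>
      (min (u+hl) (Gc gN (i+1)) - min (u+hl) (Gc gN i))
        - (min u (Gc gN (i+1)) - min u (Gc gN i)) with hwNdef
    set w : ι → ℝ := fun i => wN ↑(e.symm i) with hwdef
    set g' : ι → ℝ := fun i => g i - w i with hg'def
    set g'N : ℕ → ℝ := fun i => gN i - wN i with hg'Ndef
    have hGmono : ∀ i : ℕ, Gc gN i ≤ Gc gN (i+1) := by
      intro i; exact Gc_mono hgN (Nat.le_succ i)
    have hwN0 : ∀ i, 0 ≤ wN i := by
      intro i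
      have := delta_mono' (x := u) (x' := u + hl) (hGmono i) (by linarith)
      rw [hwNdef]; dsimp only; linarith
    have hwNle : ∀ i, wN i ≤ gN i := by
      intro i
      have h1 := delta_le hgN (u+hl) i
      have h2 := delta_nonneg hgN u i
      rw [hwNdef]; dsimp only; linarith
    have hg'N0 : ∀ i, 0 ≤ g'N i := by
      intro i; rw [hg'Ndef]; dsimp only; linarith [hwNle i]
    have hg'Na : ∀ α : Fin N, g'N ↑α = g' (e α) := by
      intro α
      rw [hg'Ndef, hg'def, hwdef]; dsimp only
      rw [hgNa α, Equiv.symm_apply_apply]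
    have hwN_sum : (∑ i ∈ Finset.range N, wN i) = hl := by
      rw [hwNdef]
      dsimp only
      rw [Finset.sum_sub_distrib, sum_delta' gN N (by linarith) (by rw [hGcN]; linarith),
        sum_delta' gN N hu0 (by rw [hGcN]; linarith)]
      ring
    have hwρ_sum : (∑ i ∈ Finset.range N, wN i * vN i) = hl * σm := by
      have expand : ∀ i, wN i * vN i
          = vN i * (min (u+hl) (Gc gN (i+1)) - min (u+hl) (Gc gN i))
            - vN i * (min u (Gc gN (i+1)) - min u (Gc gN i)) := by
        intro i; rw [hwNdef]; dsimp only; ring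
      rw [Finset.sum_congr rfl (fun i _ => expand i), Finset.sum_sub_distrib]
      have : Lam N gN vN (u + hl) - Lam N gN vN u = hl * σm := hu
      unfold Lam at this
      linarith
    have hθ : ∀ k, Gc g'N k = Gc gN k - min (u+hl) (Gc gN k) + min u (Gc gN k) := by
      intro k
      have h1 : Gc g'N k = Gc gN k - ∑ i ∈ Finset.range k, wN i := by
        rw [hg'Ndef]; unfold Gc; rw [Finset.sum_sub_distrib]
      have h2 : (∑ i ∈ Finset.range k, wN i)
          = (min (u+hl) (Gc gN k) - min (u+hl) 0) - (min u (Gc gN k) - min u 0) := by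
        rw [hwNdef]; dsimp only
        rw [Finset.sum_sub_distrib, sum_delta gN k (u+hl), sum_delta gN k u]
      rw [h1, h2, min_eq_right (by linarith : (0:ℝ) ≤ u + hl), min_eq_right hu0]
      ring
    have hGc'N : Gc g'N N = T - hl := by
      rw [hθ N, hGcN, min_eq_left (by linarith : u + hl ≤ T), min_eq_left (by linarith : u ≤ T)]
      ring
    -- the two identities for the remainder curve
    have hLam'_left : ∀ y : ℝ, y ≤ u → Lam N g'N vN y = Lam N gN vN y := by
      intro y hy
      unfold Lam
      apply Finset.sum_congr rfl
      intro i _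
      have k1 : min y (Gc g'N (i+1)) = min y (Gc gN (i+1)) := by
        rw [hθ (i+1)]; exact theta_min_left hl0 hy
      have k2 : min y (Gc g'N i) = min y (Gc gN i) := by
        rw [hθ i]; exact theta_min_left hl0 hy
      rw [k1, k2]
    have hLam'_right : ∀ y : ℝ, u ≤ y →
        Lam N g'N vN y = Lam N gN vN (y + hl) - hl * σm := by
      intro y hy
      have term : ∀ i, min y (Gc g'N i)
          = min (y+hl) (Gc gN i) - min (u+hl) (Gc gN i) + min u (Gc gN i) := by
        intro i
        rw [hθ i, theta_min_right hl0 hy,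
          min_min_right (by linarith : u + hl ≤ y + hl), min_min_right (by linarith : u ≤ y + hl)]
      have expand : ∀ i, vN i * (min y (Gc g'N (i+1)) - min y (Gc g'N i))
          = vN i * (min (y+hl) (Gc gN (i+1)) - min (y+hl) (Gc gN i)) - wN i * vN i := by
        intro i
        rw [term (i+1), term i, hwNdef]; dsimp only; ring
      unfold Lam
      rw [Finset.sum_congr rfl (fun i _ => expand i), Finset.sum_sub_distrib, hwρ_sum]
    -- transfer to ι
    have hwNa : ∀ α : Fin N, wN ↑α = w (e α) := by
      intro α; rw [hwdef]; dsimp only; rw [Equiv.symm_apply_apply]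
    have hw_sum : (∑ i, w i) = hl := by
      rw [← hconvF wN w hwNa (fun a _ => a)]; exact hwN_sum
    have hwρ_sumι : (∑ i, w i * ρ i) = hl * σm := by
      rw [← hconvF wN w hwNa (fun a v => a * v)]; exact hwρ_sum
    have hw0 : ∀ i, 0 ≤ w i := by
      intro i; rw [hwdef]; exact hwN0 _
    have hwle : ∀ i, w i ≤ g i := by
      intro i
      have h1 := hwNle ↑(e.symm i)
      rw [hgNa (e.symm i), Equiv.apply_symm_apply] at h1
      rw [hwdef]; exact h1
    have hg'0 : ∀ i, 0 ≤ g' i := by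
      intro i; rw [hg'def]; dsimp only; linarith [hwle i]
    have hbcs_sum : (∑ j : Fin n, b j.castSucc) = T - hl := by
      rw [Fin.sum_univ_castSucc] at hT
      rw [hhl]; linarith [hT]
    have hbσcs_sum : (∑ j : Fin n, b j.castSucc * σ j.castSucc)
        = (∑ j, b j * σ j) - hl * σm := by
      rw [Fin.sum_univ_castSucc (f := fun j => b j * σ j)]
      rw [hhl, hσm]; ring
    have hg'sum : (∑ i, g' i) = T - hl := by
      rw [hg'def]; dsimp only
      rw [Finset.sum_sub_distrib, hw_sum, ← hTdef]
    have hg'ρ : (∑ i, g' i * ρ i) = (∑ j, b j * σ j) - hl * σm := by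
      rw [hg'def]; dsimp only
      have : ∀ i, (g i - w i) * ρ i = g i * ρ i - w i * ρ i := fun i => by ring
      rw [Finset.sum_congr rfl (fun i _ => this i), Finset.sum_sub_distrib, hTρ, hwρ_sumι]
    have hσcs_ge : ∀ j : Fin n, σm ≤ σ j.castSucc := by
      intro j; rw [hσm]; exact hσ _ _ (Fin.le_last _)
    -- remainder majorization
    have hEm' : ∀ c : ℝ, (∑ j : Fin n, b j.castSucc * max (σ j.castSucc - c) 0)
        ≤ ∑ i, g' i * max (ρ i - c) 0 := by
      intro c
      rcases lt_or_ge c σm with hc | hc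
      · have hLHS : (∑ j : Fin n, b j.castSucc * max (σ j.castSucc - c) 0)
            = ∑ j : Fin n, b j.castSucc * (σ j.castSucc - c) := by
          apply Finset.sum_congr rfl
          intro j _
          rw [max_eq_left (by linarith [hσcs_ge j])]
        have hexp : (∑ j : Fin n, b j.castSucc * (σ j.castSucc - c))
            = (∑ j : Fin n, b j.castSucc * σ j.castSucc) - c * (∑ j : Fin n, b j.castSucc) := by
          rw [Finset.mul_sum, ← Finset.sum_sub_distrib]
          apply Finset.sum_congr rfl; intro j _; ring
        have hRHS : (∑ i, g' i * max (ρ i - c) 0) ≥ ∑ i, g' i * (ρ i - c) :=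
          Finset.sum_le_sum (fun i _ => mul_le_mul_of_nonneg_left (le_max_left _ _) (hg'0 i))
        have hexp2 : (∑ i, g' i * (ρ i - c)) = (∑ i, g' i * ρ i) - c * (∑ i, g' i) := by
          rw [Finset.mul_sum, ← Finset.sum_sub_distrib]
          apply Finset.sum_congr rfl; intro i _; ring
        rw [hLHS, hexp, hbσcs_sum, hbcs_sum]
        rw [hexp2, hg'ρ, hg'sum] at hRHS
        linarith
      · set S : Finset (Fin n) := Finset.univ.filter (fun j => c < σ j.castSucc) with hSdef
        set y : ℝ := ∑ j ∈ S, b j.castSucc with hydef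
        have hy0 : 0 ≤ y := Finset.sum_nonneg (fun j _ => hb _)
        have hyTl : y ≤ T - hl := by
          rw [hydef, ← hbcs_sum]
          exact Finset.sum_le_sum_of_subset_of_nonneg (Finset.subset_univ S)
            (fun j _ _ => hb _)
        have hLHS : (∑ j : Fin n, b j.castSucc * max (σ j.castSucc - c) 0)
            = (∑ j ∈ S, b j.castSucc * σ j.castSucc) - c * y := by
          have hsplit := Finset.sum_filter_add_sum_filter_not Finset.univ
            (fun j : Fin n => c < σ j.castSucc)
            (fun j => b j.castSucc * max (σ j.castSucc - c) 0)
          rw [← hSdef] at hsplit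
          have e1 : (∑ j ∈ S, b j.castSucc * max (σ j.castSucc - c) 0)
              = (∑ j ∈ S, b j.castSucc * σ j.castSucc) - c * y := by
            rw [hydef, Finset.mul_sum, ← Finset.sum_sub_distrib]
            apply Finset.sum_congr rfl
            intro j hj
            rw [hSdef, Finset.mem_filter] at hj
            rw [max_eq_left (by linarith [hj.2])]
            ring
          have e2 : (∑ j ∈ Finset.univ.filter (fun j : Fin n => ¬ c < σ j.castSucc),
              b j.castSucc * max (σ j.castSucc - c) 0) = 0 := by
            apply Finset.sum_eq_zero
            intro j hj
            rw [Finset.mem_filter] at hj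
            rw [max_eq_right (by push_neg at hj; linarith [hj.2])]
            ring
          rw [e2] at hsplit
          rw [← hsplit, e1]; ring
        have claim : (∑ j ∈ S, b j.castSucc * σ j.castSucc) ≤ Lam N g'N vN y := by
          rcases le_or_gt y u with hyu | hyu
          · rw [hLam'_left y hyu]
            have hmap : (∑ j ∈ S.map Fin.castSuccEmb, b j) = y := by
              rw [Finset.sum_map, hydef]
              rfl
            have := key_lb (S.map Fin.castSuccEmb) y hy0 (by linarith) hmap
            rw [Finset.sum_map] at this
            simpa [Fin.coe_castSuccEmb] using this
          · rw [hLam'_right y (le_of_lt hyu)]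
            have hnot : Fin.last n ∉ S.map Fin.castSuccEmb := by
              rw [Finset.mem_map]
              rintro ⟨j, _, hj⟩
              exact absurd hj (ne_of_lt (Fin.castSucc_lt_last j))
            have hsum1 : (∑ j ∈ insert (Fin.last n) (S.map Fin.castSuccEmb), b j)
                = y + hl := by
              rw [Finset.sum_insert hnot, Finset.sum_map, hhl, hydef]
              rw [add_comm]
              rfl
            have := key_lb (insert (Fin.last n) (S.map Fin.castSuccEmb))
              (y + hl) (by linarith) (by linarith) hsum1
            rw [Finset.sum_insert hnot, Finset.sum_map] at this
            rw [← hhl, ← hσm] at this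
            simp only [Fin.coe_castSuccEmb] at this
            linarith
        have hR1 := lam_le N g'N vN hg'N0 hy0 (by rw [hGc'N]; linarith) c
        have hR2 : (∑ i ∈ Finset.range N, g'N i * max (vN i - c) 0)
            = ∑ i, g' i * max (ρ i - c) 0 :=
          hconvF g'N g' hg'Na (fun a v => a * max (v - c) 0)
        rw [hR2] at hR1
        rw [hLHS]
        linarith
    -- apply the induction hypothesis
    obtain ⟨PP', hPP'0, hPP'col, hPP'row, hPP'rowρ⟩ := IH ρ g' (fun j => b j.castSucc)
      (fun j => σ j.castSucc) hg'0 (fun j => hb _)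
      (fun j k hjk => hσ _ _ (Fin.castSucc_le_castSucc_iff.mpr hjk))
      (by rw [hg'sum, hbcs_sum]) (by rw [hg'ρ, hbσcs_sum])
      hEm'
    refine ⟨fun j => Fin.lastCases w PP' j, ?_, ?_, ?_, ?_⟩
    · intro j i
      induction j using Fin.lastCases with
      | last => simpa using hw0 i
      | cast j => simpa using hPP'0 j i
    · intro i
      rw [Fin.sum_univ_castSucc]
      simp only [Fin.lastCases_castSucc, Fin.lastCases_last]
      rw [hPP'col i]
      rw [hg'def]; dsimp only; ring
    · intro j
      induction j using Fin.lastCases with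
      | last => simpa [hhl] using hw_sum
      | cast j => simpa using hPP'row j
    · intro j
      induction j using Fin.lastCases with
      | last =>
        simp only [Fin.lastCases_last]
        rw [hwρ_sumι, hhl, hσm]
      | cast j => simpa using hPP'rowρ j


section CumulLemmas

variable {ι : Type*} [Fintype ι]

lemma cumul_zero (v : ι → ℝ) (e : Fin (Fintype.card ι) ≃ ι) : cumul v e 0 = 0 := by
  simp [cumul]

lemma cumul_succ (v : ι → ℝ) (e : Fin (Fintype.card ι) ≃ ι) {m : ℕ}
    (hm : m < Fintype.card ι) :
    cumul v e (m+1) = cumul v e m + v (e ⟨m, hm⟩) := by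
  unfold cumul
  have hins : Finset.univ.filter (fun α : Fin (Fintype.card ι) => (α : ℕ) < m+1)
      = insert (⟨m, hm⟩ : Fin (Fintype.card ι))
          (Finset.univ.filter (fun α : Fin (Fintype.card ι) => (α : ℕ) < m)) := by
    ext α
    simp only [Finset.mem_insert, Finset.mem_filter, Finset.mem_univ, true_and, Fin.ext_iff]
    omega
  rw [hins, Finset.sum_insert (by simp)]
  ring

lemma cumul_mono {g : ι → ℝ} (hg : ∀ i, 0 ≤ g i) (e : Fin (Fintype.card ι) ≃ ι)
    {k k' : ℕ} (hk : k ≤ k') : cumul g e k ≤ cumul g e k' := by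
  refine Finset.sum_le_sum_of_subset_of_nonneg ?_ (fun α _ _ => hg _)
  intro α hα
  simp only [Finset.mem_filter, Finset.mem_univ, true_and] at hα ⊢
  omega

lemma cumul_nonneg {g : ι → ℝ} (hg : ∀ i, 0 ≤ g i) (e : Fin (Fintype.card ι) ≃ ι)
    (k : ℕ) : 0 ≤ cumul g e k := by
  rw [← cumul_zero g e]; exact cumul_mono hg e (Nat.zero_le k)

lemma cumul_card (v : ι → ℝ) (e : Fin (Fintype.card ι) ≃ ι) {k : ℕ}
    (hk : Fintype.card ι ≤ k) : cumul v e k = ∑ i, v i := by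
  unfold cumul
  rw [Finset.filter_true_of_mem (fun α _ => lt_of_lt_of_le α.isLt hk)]
  exact Equiv.sum_comp e v

lemma card_pos_of_sum_one {g : ι → ℝ} (hgsum : (∑ i, g i) = 1) : 0 < Fintype.card ι := by
  rcases Nat.eq_zero_or_pos (Fintype.card ι) with h | h
  · have : IsEmpty ι := Fintype.card_eq_zero_iff.mp h
    rw [Finset.univ_eq_empty, Finset.sum_empty] at hgsum
    norm_num at hgsum
  · exact h

lemma exists_segment {g : ι → ℝ} (hg : ∀ i, 0 ≤ g i) (hgsum : (∑ i, g i) = 1)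
    (e : Fin (Fintype.card ι) ≃ ι) {x : ℝ} (hx0 : 0 ≤ x) (hx1 : x ≤ 1) :
    ∃ m : Fin (Fintype.card ι), cumul g e ↑m ≤ x ∧ x ≤ cumul g e (↑m + 1) := by
  classical
  have hcard := card_pos_of_sum_one hgsum
  set P : ℕ → Prop := fun k => cumul g e k ≤ x with hP
  have hP0 : P 0 := by rw [hP]; dsimp only; rw [cumul_zero]; exact hx0
  set k := Nat.findGreatest P (Fintype.card ι - 1) with hkdef
  have hk1 : cumul g e k ≤ x := Nat.findGreatest_spec (Nat.zero_le _) hP0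
  have hkN : k < Fintype.card ι := lt_of_le_of_lt (Nat.findGreatest_le _) (by omega)
  have hk2 : x ≤ cumul g e (k+1) := by
    rcases lt_or_ge k (Fintype.card ι - 1) with h | h
    · by_contra hlt
      push_neg at hlt
      exact (Nat.findGreatest_is_greatest (P := P) (n := Fintype.card ι - 1) (k := k+1)
        (by omega) (by omega)) (le_of_lt hlt)
    · have hkeq : k + 1 ≥ Fintype.card ι := by omega
      rw [cumul_card g e hkeq, hgsum]; exact hx1
  exact ⟨⟨k, hkN⟩, hk1, hk2⟩

lemma lorenz_le {v g : ι → ℝ} {L : ℝ → ℝ}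
    (hg0 : ∀ i, 0 < g i) (hgsum : (∑ i, g i) = 1)
    (e : Fin (Fintype.card ι) ≃ ι)
    (hint : ∀ m : Fin (Fintype.card ι), ∀ x : ℝ,
      cumul g e ↑m ≤ x → x ≤ cumul g e (↑m + 1) →
      L x = cumul v e ↑m + (x - cumul g e ↑m) * (v (e m) / g (e m)))
    {x : ℝ} (hx0 : 0 ≤ x) (hx1 : x ≤ 1) (c : ℝ) :
    L x ≤ (∑ i, max (v i - c * g i) 0) + c * x := by
  obtain ⟨m, hm1, hm2⟩ := exists_segment (fun i => le_of_lt (hg0 i)) hgsum e hx0 hx1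
  rw [hint m x hm1 hm2]
  set A := Finset.univ.filter (fun α : Fin (Fintype.card ι) => (α : ℕ) < ↑m) with hA
  have s1 : cumul v e ↑m - c * cumul g e ↑m = ∑ α ∈ A, (v (e α) - c * g (e α)) := by
    unfold cumul
    rw [Finset.mul_sum, ← Finset.sum_sub_distrib, hA]
  have s2 : (∑ α ∈ A, (v (e α) - c * g (e α))) ≤ ∑ α ∈ A, max (v (e α) - c * g (e α)) 0 :=
    Finset.sum_le_sum (fun α _ => le_max_left _ _)
  have hgm : g (e m) ≠ 0 := ne_of_gt (hg0 _)
  have t2 : (x - cumul g e ↑m) * (v (e m) / g (e m) - c) ≤ max (v (e m) - c * g (e m)) 0 := by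
    have hxm : x - cumul g e ↑m ≤ g (e m) := by
      rw [cumul_succ g e m.isLt] at hm2
      linarith
    have hxm0 : 0 ≤ x - cumul g e ↑m := by linarith
    rcases le_or_gt 0 (v (e m) / g (e m) - c) with hsg | hsg
    · have : (x - cumul g e ↑m) * (v (e m) / g (e m) - c)
          ≤ g (e m) * (v (e m) / g (e m) - c) :=
        mul_le_mul_of_nonneg_right hxm hsg
      have heq : g (e m) * (v (e m) / g (e m) - c) = v (e m) - c * g (e m) := by
        field_simp
      calc (x - cumul g e ↑m) * (v (e m) / g (e m) - c) ≤ _ := this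
        _ = v (e m) - c * g (e m) := heq
        _ ≤ _ := le_max_left _ _
    · have : (x - cumul g e ↑m) * (v (e m) / g (e m) - c) ≤ 0 :=
        mul_nonpos_of_nonneg_of_nonpos hxm0 (le_of_lt hsg)
      exact le_trans this (le_max_right _ _)
  have hmA : (m : Fin (Fintype.card ι)) ∉ A := by
    rw [hA]; simp
  have s3 : (∑ α ∈ A, max (v (e α) - c * g (e α)) 0) + max (v (e m) - c * g (e m)) 0
      = ∑ α ∈ insert (m : Fin (Fintype.card ι)) A, max (v (e α) - c * g (e α)) 0 := by
    rw [Finset.sum_insert hmA]; ring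
  have s4 : (∑ α ∈ insert (m : Fin (Fintype.card ι)) A, max (v (e α) - c * g (e α)) 0)
      ≤ ∑ α : Fin (Fintype.card ι), max (v (e α) - c * g (e α)) 0 :=
    Finset.sum_le_sum_of_subset_of_nonneg (Finset.subset_univ _)
      (fun α _ _ => le_max_right _ _)
  have s5 : (∑ α : Fin (Fintype.card ι), max (v (e α) - c * g (e α)) 0)
      = ∑ i, max (v i - c * g i) 0 := Equiv.sum_comp e (fun i => max (v i - c * g i) 0)
  have expand : cumul v e ↑m + (x - cumul g e ↑m) * (v (e m) / g (e m))
      = (cumul v e ↑m - c * cumul g e ↑m)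
        + (x - cumul g e ↑m) * (v (e m) / g (e m) - c) + c * x := by ring
  rw [expand, s1]
  rw [s5] at s4
  linarith

lemma lorenz_att {v g : ι → ℝ} {L : ℝ → ℝ}
    (hv0 : ∀ i, 0 ≤ v i) (hg0 : ∀ i, 0 < g i) (hgsum : (∑ i, g i) = 1)
    (e : Fin (Fintype.card ι) ≃ ι)
    (hsort : ∀ a b : Fin (Fintype.card ι), a ≤ b → v (e b) / g (e b) ≤ v (e a) / g (e a))
    (hint : ∀ m : Fin (Fintype.card ι), ∀ x : ℝ,
      cumul g e ↑m ≤ x → x ≤ cumul g e (↑m + 1) →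
      L x = cumul v e ↑m + (x - cumul g e ↑m) * (v (e m) / g (e m)))
    {x : ℝ} (hx0 : 0 ≤ x) (hx1 : x ≤ 1) :
    ∃ c : ℝ, 0 ≤ c ∧ L x = (∑ i, max (v i - c * g i) 0) + c * x := by
  obtain ⟨m, hm1, hm2⟩ := exists_segment (fun i => le_of_lt (hg0 i)) hgsum e hx0 hx1
  set c : ℝ := v (e m) / g (e m) with hc
  refine ⟨c, div_nonneg (hv0 _) (le_of_lt (hg0 _)), ?_⟩
  rw [hint m x hm1 hm2]
  have key : ∀ i, v i - c * g i = g i * (v i / g i - c) := by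
    intro i
    have := ne_of_gt (hg0 i)
    field_simp
  have hsplit := Finset.sum_filter_add_sum_filter_not Finset.univ
    (fun α : Fin (Fintype.card ι) => (α : ℕ) < ↑m)
    (fun α => max (v (e α) - c * g (e α)) 0)
  have e1 : (∑ α ∈ Finset.univ.filter (fun α : Fin (Fintype.card ι) => (α : ℕ) < ↑m),
      max (v (e α) - c * g (e α)) 0)
      = ∑ α ∈ Finset.univ.filter (fun α : Fin (Fintype.card ι) => (α : ℕ) < ↑m),
        (v (e α) - c * g (e α)) := by
    apply Finset.sum_congr rfl
    intro α hα
    rw [Finset.mem_filter] at hα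
    have hle : α ≤ m := by
      rw [Fin.le_def]; omega
    have hratio : c ≤ v (e α) / g (e α) := hsort α m hle
    rw [key (e α)]
    exact max_eq_left (mul_nonneg (le_of_lt (hg0 _)) (by linarith))
  have e2 : (∑ α ∈ Finset.univ.filter (fun α : Fin (Fintype.card ι) => ¬ (α : ℕ) < ↑m),
      max (v (e α) - c * g (e α)) 0) = 0 := by
    apply Finset.sum_eq_zero
    intro α hα
    rw [Finset.mem_filter] at hα
    have hle : m ≤ α := by
      rw [Fin.le_def]; omega
    have hratio : v (e α) / g (e α) ≤ c := hsort m α hle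
    rw [key (e α)]
    exact max_eq_right (mul_nonpos_of_nonneg_of_nonpos (le_of_lt (hg0 _)) (by linarith))
  have e3 : (∑ α ∈ Finset.univ.filter (fun α : Fin (Fintype.card ι) => (α : ℕ) < ↑m),
      (v (e α) - c * g (e α))) = cumul v e ↑m - c * cumul g e ↑m := by
    unfold cumul
    rw [Finset.mul_sum, ← Finset.sum_sub_distrib]
  have e4 : (∑ i, max (v i - c * g i) 0)
      = ∑ α : Fin (Fintype.card ι), max (v (e α) - c * g (e α)) 0 :=
    (Equiv.sum_comp e (fun i => max (v i - c * g i) 0)).symm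
  rw [e4, ← hsplit, e1, e2, e3]
  ring

lemma lorenz_att2 {v g : ι → ℝ} {L : ℝ → ℝ}
    (hg0 : ∀ i, 0 < g i) (hgsum : (∑ i, g i) = 1)
    (e : Fin (Fintype.card ι) ≃ ι)
    (hsort : ∀ a b : Fin (Fintype.card ι), a ≤ b → v (e b) / g (e b) ≤ v (e a) / g (e a))
    (hint : ∀ m : Fin (Fintype.card ι), ∀ x : ℝ,
      cumul g e ↑m ≤ x → x ≤ cumul g e (↑m + 1) →
      L x = cumul v e ↑m + (x - cumul g e ↑m) * (v (e m) / g (e m)))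
    (c : ℝ) :
    ∃ x : ℝ, 0 ≤ x ∧ x ≤ 1 ∧ (∑ i, max (v i - c * g i) 0) = L x - c * x := by
  classical
  have hcard := card_pos_of_sum_one hgsum
  have hgnn : ∀ i, 0 ≤ g i := fun i => le_of_lt (hg0 i)
  have key : ∀ i, v i - c * g i = g i * (v i / g i - c) := by
    intro i
    have := ne_of_gt (hg0 i)
    field_simp
  by_cases hall : ∀ α : Fin (Fintype.card ι), v (e α) / g (e α) ≤ c
  · refine ⟨0, le_rfl, zero_le_one, ?_⟩
    have hF : (∑ i, max (v i - c * g i) 0) = 0 := by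
      rw [← Equiv.sum_comp e (fun i => max (v i - c * g i) 0)]
      apply Finset.sum_eq_zero
      intro α _
      rw [key (e α)]
      exact max_eq_right (mul_nonpos_of_nonneg_of_nonpos (hgnn _) (by linarith [hall α]))
    have hL0 : L 0 = 0 := by
      have h0 := hint ⟨0, hcard⟩ 0 (by rw [cumul_zero]) (cumul_nonneg hgnn e _)
      rw [h0, cumul_zero, cumul_zero]
      ring
    rw [hF, hL0]; ring
  · push_neg at hall
    obtain ⟨α₀, hα₀⟩ := hall
    set P : ℕ → Prop := fun k => ∃ hk : k < Fintype.card ι,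
      c < v (e ⟨k, hk⟩) / g (e ⟨k, hk⟩) with hPdef
    have hPα₀ : P ↑α₀ := ⟨α₀.isLt, by simpa using hα₀⟩
    set k := Nat.findGreatest P (Fintype.card ι - 1) with hkdef
    have hkP : P k := Nat.findGreatest_spec (by omega : (α₀ : ℕ) ≤ Fintype.card ι - 1) hPα₀
    obtain ⟨hkn, hck⟩ := hkP
    have hup : ∀ α : Fin (Fintype.card ι), k < ↑α → v (e α) / g (e α) ≤ c := by
      intro α hα
      by_contra hcon
      push_neg at hcon
      exact (Nat.findGreatest_is_greatest (P := P) (n := Fintype.card ι - 1) (k := ↑α)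
        (by omega) (by omega)) ⟨α.isLt, by simpa using hcon⟩
    have hdown : ∀ α : Fin (Fintype.card ι), (α : ℕ) ≤ k → c < v (e α) / g (e α) := by
      intro α hα
      have := hsort α ⟨k, hkn⟩ (by rw [Fin.le_def]; exact hα)
      linarith
    set x : ℝ := cumul g e (k+1) with hx
    have hx0 : 0 ≤ x := cumul_nonneg hgnn e _
    have hx1 : x ≤ 1 := by
      rw [hx, ← hgsum, ← cumul_card g e (le_refl (Fintype.card ι))]
      exact cumul_mono hgnn e (by omega)
    refine ⟨x, hx0, hx1, ?_⟩
    have hm1 : cumul g e k ≤ x := cumul_mono hgnn e (Nat.le_succ k)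
    have hLx : L x = cumul v e (k+1) := by
      have h0 := hint ⟨k, hkn⟩ x hm1 le_rfl
      simp only [Fin.val_mk] at h0
      rw [h0, hx, cumul_succ g e hkn, cumul_succ v e hkn]
      have hgm := ne_of_gt (hg0 (e ⟨k, hkn⟩))
      field_simp
      ring
    have hsplit := Finset.sum_filter_add_sum_filter_not Finset.univ
      (fun α : Fin (Fintype.card ι) => (α : ℕ) < k+1)
      (fun α => max (v (e α) - c * g (e α)) 0)
    have e1 : (∑ α ∈ Finset.univ.filter (fun α : Fin (Fintype.card ι) => (α : ℕ) < k+1),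
        max (v (e α) - c * g (e α)) 0)
        = ∑ α ∈ Finset.univ.filter (fun α : Fin (Fintype.card ι) => (α : ℕ) < k+1),
          (v (e α) - c * g (e α)) := by
      apply Finset.sum_congr rfl
      intro α hα
      rw [Finset.mem_filter] at hα
      have := hdown α (by omega)
      rw [key (e α)]
      exact max_eq_left (mul_nonneg (hgnn _) (by linarith))
    have e2 : (∑ α ∈ Finset.univ.filter (fun α : Fin (Fintype.card ι) => ¬ (α : ℕ) < k+1),
        max (v (e α) - c * g (e α)) 0) = 0 := by
      apply Finset.sum_eq_zero
      intro α hα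
      rw [Finset.mem_filter] at hα
      have := hup α (by omega)
      rw [key (e α)]
      exact max_eq_right (mul_nonpos_of_nonneg_of_nonpos (hgnn _) (by linarith))
    have e3 : (∑ α ∈ Finset.univ.filter (fun α : Fin (Fintype.card ι) => (α : ℕ) < k+1),
        (v (e α) - c * g (e α))) = cumul v e (k+1) - c * cumul g e (k+1) := by
      unfold cumul
      rw [Finset.mul_sum, ← Finset.sum_sub_distrib]
    have e4 : (∑ i, max (v i - c * g i) 0)
        = ∑ α : Fin (Fintype.card ι), max (v (e α) - c * g (e α)) 0 :=
      (Equiv.sum_comp e (fun i => max (v i - c * g i) 0)).symm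
    rw [e4, ← hsplit, e1, e2, e3, hLx, hx]
    ring

end CumulLemmas


/-- equimajorization for states on different systems is equivalent to
domination of the rescaled Lorenz curves of `r ⊗ g_S` and `g_R ⊗ s`. -/
theorem equimajorization_iff_lorenz_diff_systems {d d' : ℕ}
    (r gR : Fin d → ℝ) (s gS : Fin d' → ℝ)
    (hr : IsProbVec r) (hgR : IsProbVec gR) (hs : IsProbVec s) (hgS : IsProbVec gS)
    (hgRpos : ∀ i, 0 < gR i) (hgSpos : ∀ i, 0 < gS i)
    (L₁ L₂ : ℝ → ℝ)
    (hL₁ : IsLorenzCurveOf (tens r gS) (tens gR gS) L₁)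
    (hL₂ : IsLorenzCurveOf (tens gR s) (tens gR gS) L₂) :
    (∃ M : Matrix (Fin d × Fin d') (Fin d × Fin d') ℝ, ColStochastic M ∧
      M.mulVec (tens gR gS) = tens gR gS ∧ M.mulVec (tens r gS) = tens gR s) ↔
    (∀ x ∈ Set.Icc (0 : ℝ) 1, L₂ x ≤ L₁ x) := by
  classical
  obtain ⟨e₁, hsort₁, hint₁⟩ := hL₁
  obtain ⟨e₂, hsort₂, hint₂⟩ := hL₂
  have hp0 : ∀ i : Fin d × Fin d', 0 ≤ tens r gS i := fun i => mul_nonneg (hr.1 _) (hgS.1 _)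
  have hq0 : ∀ i : Fin d × Fin d', 0 ≤ tens gR s i := fun i => mul_nonneg (hgR.1 _) (hs.1 _)
  have hg0 : ∀ i : Fin d × Fin d', 0 < tens gR gS i := fun i => mul_pos (hgRpos _) (hgSpos _)
  have hgne : ∀ i : Fin d × Fin d', tens gR gS i ≠ 0 := fun i => ne_of_gt (hg0 i)
  have sum_tens : ∀ (a : Fin d → ℝ) (b' : Fin d' → ℝ),
      (∑ i : Fin d × Fin d', tens a b' i) = (∑ x, a x) * (∑ y, b' y) := by
    intro a b'
    rw [Finset.sum_mul_sum]
    rw [Fintype.sum_prod_type]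
    rfl
  have hpsum : (∑ i, tens r gS i) = 1 := by rw [sum_tens, hr.2, hgS.2]; norm_num
  have hqsum : (∑ i, tens gR s i) = 1 := by rw [sum_tens, hgR.2, hs.2]; norm_num
  have hgsum : (∑ i, tens gR gS i) = 1 := by rw [sum_tens, hgR.2, hgS.2]; norm_num
  constructor
  · rintro ⟨M, ⟨hM0, hMcol⟩, hMg, hMp⟩ x hx
    obtain ⟨hx0, hx1⟩ := hx
    have hEmaj : ∀ c : ℝ, (∑ j, max (tens gR s j - c * tens gR gS j) 0)
        ≤ ∑ i, max (tens r gS i - c * tens gR gS i) 0 := by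
      intro c
      have hqj : ∀ j, tens gR s j - c * tens gR gS j
          = ∑ i, M j i * (tens r gS i - c * tens gR gS i) := by
        intro j
        have h1 : tens gR s j = ∑ i, M j i * tens r gS i := by rw [← hMp]; rfl
        have h2 : tens gR gS j = ∑ i, M j i * tens gR gS i := by
          conv_lhs => rw [← hMg]
          rfl
        rw [h1, h2, Finset.mul_sum, ← Finset.sum_sub_distrib]
        apply Finset.sum_congr rfl; intro i _; ring
      have step : ∀ j, max (tens gR s j - c * tens gR gS j) 0
          ≤ ∑ i, M j i * max (tens r gS i - c * tens gR gS i) 0 := by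
        intro j
        rw [hqj j]
        apply max_le
        · exact Finset.sum_le_sum
            (fun i _ => mul_le_mul_of_nonneg_left (le_max_left _ _) (hM0 j i))
        · exact Finset.sum_nonneg (fun i _ => mul_nonneg (hM0 j i) (le_max_right _ _))
      calc (∑ j, max (tens gR s j - c * tens gR gS j) 0)
          ≤ ∑ j, ∑ i, M j i * max (tens r gS i - c * tens gR gS i) 0 :=
            Finset.sum_le_sum (fun j _ => step j)
        _ = ∑ i, ∑ j, M j i * max (tens r gS i - c * tens gR gS i) 0 := Finset.sum_comm
        _ = ∑ i, max (tens r gS i - c * tens gR gS i) 0 := by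
            apply Finset.sum_congr rfl
            intro i _
            rw [← Finset.sum_mul, hMcol i, one_mul]
    obtain ⟨c₁, hc₁0, hc₁⟩ := lorenz_att hp0 hg0 hgsum e₁ hsort₁ hint₁ hx0 hx1
    have h2 := lorenz_le hg0 hgsum e₂ hint₂ hx0 hx1 c₁
    have h3 := hEmaj c₁
    linarith
  · intro hdom
    have hEmaj : ∀ c : ℝ, (∑ j, max (tens gR s j - c * tens gR gS j) 0)
        ≤ ∑ i, max (tens r gS i - c * tens gR gS i) 0 := by
      intro c
      rcases le_or_gt 0 c with hc | hc
      · obtain ⟨x, hx0, hx1, hFq⟩ := lorenz_att2 hg0 hgsum e₂ hsort₂ hint₂ c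
        have h1 := hdom x ⟨hx0, hx1⟩
        have h2 := lorenz_le hg0 hgsum e₁ hint₁ hx0 hx1 c
        linarith
      · have hFq : (∑ j, max (tens gR s j - c * tens gR gS j) 0) = 1 - c := by
          rw [show (1:ℝ) - c = (∑ j, tens gR s j) - c * (∑ j : Fin d × Fin d', tens gR gS j) by
            rw [hqsum, hgsum]; ring]
          rw [Finset.mul_sum, ← Finset.sum_sub_distrib]
          apply Finset.sum_congr rfl
          intro j _
          exact max_eq_left (by nlinarith [hq0 j, hg0 j])
        have hFp : (∑ i, max (tens r gS i - c * tens gR gS i) 0) = 1 - c := by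
          rw [show (1:ℝ) - c = (∑ i, tens r gS i) - c * (∑ i : Fin d × Fin d', tens gR gS i) by
            rw [hpsum, hgsum]; ring]
          rw [Finset.mul_sum, ← Finset.sum_sub_distrib]
          apply Finset.sum_congr rfl
          intro i _
          exact max_eq_left (by nlinarith [hp0 i, hg0 i])
        rw [hFq, hFp]
    -- apply the coupling construction
    have hbσsum : (∑ j : Fin (Fintype.card (Fin d × Fin d')),
        tens gR gS (e₂ j) * (tens gR s (e₂ j) / tens gR gS (e₂ j))) = 1 := by
      rw [show (1:ℝ) = ∑ i, tens gR s i from hqsum.symm,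
        ← Equiv.sum_comp e₂ (tens gR s)]
      apply Finset.sum_congr rfl
      intro j _
      rw [mul_comm, div_mul_cancel₀ _ (hgne _)]
    have hgρsum : (∑ i, tens gR gS i * (tens r gS i / tens gR gS i)) = 1 := by
      rw [show (1:ℝ) = ∑ i, tens r gS i from hpsum.symm]
      apply Finset.sum_congr rfl
      intro i _
      rw [mul_comm, div_mul_cancel₀ _ (hgne _)]
    have hconvmax : ∀ (c : ℝ) (i : Fin d × Fin d'),
        tens gR gS i * max (tens r gS i / tens gR gS i - c) 0
          = max (tens r gS i - c * tens gR gS i) 0 := by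
      intro c i
      rw [mul_max_of_nonneg _ _ (le_of_lt (hg0 i)), mul_zero, mul_sub,
        mul_comm (tens gR gS i) (tens r gS i / tens gR gS i),
        div_mul_cancel₀ _ (hgne i), mul_comm (tens gR gS i) c]
    have hconvmax' : ∀ (c : ℝ) (j : Fin d × Fin d'),
        tens gR gS j * max (tens gR s j / tens gR gS j - c) 0
          = max (tens gR s j - c * tens gR gS j) 0 := by
      intro c j
      rw [mul_max_of_nonneg _ _ (le_of_lt (hg0 j)), mul_zero, mul_sub,
        mul_comm (tens gR gS j) (tens gR s j / tens gR gS j),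
        div_mul_cancel₀ _ (hgne j), mul_comm (tens gR gS j) c]
    obtain ⟨PP, hPP0, hPPcol, hPProw, hPProwρ⟩ := main_coupling
      (Fintype.card (Fin d × Fin d'))
      (fun i => tens r gS i / tens gR gS i) (tens gR gS)
      (fun j => tens gR gS (e₂ j))
      (fun j => tens gR s (e₂ j) / tens gR gS (e₂ j))
      (fun i => le_of_lt (hg0 i)) (fun j => le_of_lt (hg0 _))
      (fun j k hjk => hsort₂ j k hjk)
      (Equiv.sum_comp e₂ (tens gR gS)).symm
      (by rw [hgρsum, hbσsum])
      (by
        intro c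
        calc (∑ j : Fin (Fintype.card (Fin d × Fin d')),
              tens gR gS (e₂ j) * max (tens gR s (e₂ j) / tens gR gS (e₂ j) - c) 0)
            = ∑ j : Fin (Fintype.card (Fin d × Fin d')),
              max (tens gR s (e₂ j) - c * tens gR gS (e₂ j)) 0 :=
              Finset.sum_congr rfl (fun j _ => hconvmax' c (e₂ j))
          _ = ∑ j, max (tens gR s j - c * tens gR gS j) 0 :=
              Equiv.sum_comp e₂ (fun j => max (tens gR s j - c * tens gR gS j) 0)
          _ ≤ ∑ i, max (tens r gS i - c * tens gR gS i) 0 := hEmaj c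
          _ = ∑ i, tens gR gS i * max (tens r gS i / tens gR gS i - c) 0 :=
              (Finset.sum_congr rfl (fun i _ => hconvmax c i)).symm)
    refine ⟨fun j i => PP (e₂.symm j) i / tens gR gS i, ⟨?_, ?_⟩, ?_, ?_⟩
    · intro i j
      exact div_nonneg (hPP0 _ _) (le_of_lt (hg0 _))
    · intro j
      rw [show (∑ i, PP (e₂.symm i) j / tens gR gS j)
          = (∑ i, PP (e₂.symm i) j) / tens gR gS j from Finset.sum_div ..|>.symm]
      rw [show (∑ i, PP (e₂.symm i) j) = ∑ β, PP β j from
        Equiv.sum_comp e₂.symm (fun β => PP β j)]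
      rw [hPPcol j]
      exact div_self (hgne j)
    · funext j
      show (∑ i, PP (e₂.symm j) i / tens gR gS i * tens gR gS i) = tens gR gS j
      calc (∑ i, PP (e₂.symm j) i / tens gR gS i * tens gR gS i)
          = ∑ i, PP (e₂.symm j) i :=
            Finset.sum_congr rfl (fun i _ => div_mul_cancel₀ _ (hgne i))
        _ = tens gR gS (e₂ (e₂.symm j)) := hPProw (e₂.symm j)
        _ = tens gR gS j := by rw [Equiv.apply_symm_apply]
    · funext j
      show (∑ i, PP (e₂.symm j) i / tens gR gS i * tens r gS i) = tens gR s j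
      calc (∑ i, PP (e₂.symm j) i / tens gR gS i * tens r gS i)
          = ∑ i, PP (e₂.symm j) i * (tens r gS i / tens gR gS i) :=
            Finset.sum_congr rfl (fun i _ => by rw [div_mul_eq_mul_div, mul_div_assoc])
        _ = tens gR gS (e₂ (e₂.symm j))
            * (tens gR s (e₂ (e₂.symm j)) / tens gR gS (e₂ (e₂.symm j))) :=
            hPProwρ (e₂.symm j)
        _ = tens gR s j := by
            rw [Equiv.apply_symm_apply, mul_comm, div_mul_cancel₀ _ (hgne j)]
end

section
/- The two formulations of equimajorization agree for states defined on the same system: for probability vectors r, s and a strictly positive probability vector g on Fin d, there exists a column-stochastic d×d matrix M with M g = g and M r = s if and only if there exists a column-stochastic matrix M' on Fin d × Fin d with M' (g ⊗ g) = g ⊗ g and M' (r ⊗ g) = g ⊗ s. -/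
open Finset Real Filter

/-- the two formulations of equimajorization agree for states on the same
system. -/
theorem equimajorizes_iff_composed {d : ℕ} (r s g : Fin d → ℝ)
    (hr : IsProbVec r) (hs : IsProbVec s) (hg : IsProbVec g) (hgpos : ∀ i, 0 < g i) :
    (∃ M : Matrix (Fin d) (Fin d) ℝ, ColStochastic M ∧ M.mulVec g = g ∧ M.mulVec r = s) ↔
    (∃ M' : Matrix (Fin d × Fin d) (Fin d × Fin d) ℝ, ColStochastic M' ∧
      M'.mulVec (tens g g) = tens g g ∧ M'.mulVec (tens r g) = tens g s) := by
  constructor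
  · rintro ⟨M, ⟨hMnn, hMc⟩, hMg, hMr⟩
    have key : ∀ v : Fin d × Fin d → ℝ, ∀ p : Fin d × Fin d,
        (Matrix.mulVec (fun p q : Fin d × Fin d => (if p.1 = q.2 then 1 else 0) * M p.2 q.1) v) p
          = ∑ k, M p.2 k * v (k, p.1) := by
      intro v p
      simp only [Matrix.mulVec, dotProduct, Fintype.sum_prod_type]
      refine Finset.sum_congr rfl fun k _ => ?_
      simp [ite_mul]
    refine ⟨fun p q => (if p.1 = q.2 then 1 else 0) * M p.2 q.1, ⟨?_, ?_⟩, ?_, ?_⟩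
    · intro q p
      exact mul_nonneg (by split <;> norm_num) (hMnn _ _)
    · rintro ⟨k, l⟩
      rw [Fintype.sum_prod_type]
      simp only [ite_mul, one_mul, zero_mul]
      rw [Finset.sum_comm]
      simp [hMc k]
    · funext p
      rw [key]
      have h1 : ∑ k, M p.2 k * tens g g (k, p.1) = g p.1 * ∑ k, M p.2 k * g k := by
        rw [Finset.mul_sum]
        refine Finset.sum_congr rfl fun k _ => by simp [tens]; ring
      have h2 := congrFun hMg p.2
      simp only [Matrix.mulVec, dotProduct] at h2
      rw [h1, h2]; rfl
    · funext p
      rw [key]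
      have h1 : ∑ k, M p.2 k * tens r g (k, p.1) = g p.1 * ∑ k, M p.2 k * r k := by
        rw [Finset.mul_sum]
        refine Finset.sum_congr rfl fun k _ => by simp [tens]; ring
      have h2 := congrFun hMr p.2
      simp only [Matrix.mulVec, dotProduct] at h2
      rw [h1, h2]; rfl
  · rintro ⟨M', ⟨hnn, hc⟩, hGg, hRs⟩
    have key : ∀ v : Fin d → ℝ, ∀ j,
        (Matrix.mulVec (fun j k => ∑ i, ∑ l, M' (i, j) (k, l) * g l) v) j
          = ∑ i, (M'.mulVec (tens v g)) (i, j) := by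
      intro v j
      simp only [Matrix.mulVec, dotProduct, Fintype.sum_prod_type, tens]
      simp only [Finset.sum_mul]
      rw [Finset.sum_comm]
      refine Finset.sum_congr rfl fun i _ => Finset.sum_congr rfl fun k _ =>
        Finset.sum_congr rfl fun l _ => by ring
    refine ⟨fun j k => ∑ i, ∑ l, M' (i, j) (k, l) * g l, ⟨?_, ?_⟩, ?_, ?_⟩
    · intro j k
      exact Finset.sum_nonneg fun i _ => Finset.sum_nonneg fun l _ =>
        mul_nonneg (hnn _ _) (hg.1 l)
    · intro k
      have h1 : ∀ l, ∑ i, ∑ j, M' (i, j) (k, l) = 1 := by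
        intro l
        have := hc (k, l)
        rwa [Fintype.sum_prod_type] at this
      calc ∑ j, ∑ i, ∑ l, M' (i, j) (k, l) * g l
          = ∑ j, ∑ l, ∑ i, M' (i, j) (k, l) * g l := by
            exact Finset.sum_congr rfl fun j _ => Finset.sum_comm
        _ = ∑ l, ∑ j, ∑ i, M' (i, j) (k, l) * g l := Finset.sum_comm
        _ = ∑ l, (∑ i, ∑ j, M' (i, j) (k, l)) * g l := by
            refine Finset.sum_congr rfl fun l _ => ?_
            rw [Finset.sum_mul, Finset.sum_comm]
            exact Finset.sum_congr rfl fun j _ => (Finset.sum_mul _ _ _).symm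
        _ = ∑ l, g l := by simp [h1]
        _ = 1 := hg.2
    · funext j
      rw [key, hGg]
      simp [tens, ← Finset.sum_mul, hg.2]
    · funext j
      rw [key, hRs]
      simp [tens, ← Finset.sum_mul, hg.2]
end

section
/- (Asymptotic equipartition for the hypothesis-testing relative entropy) Let r and g be probability vectors on Fin d with g strictly positive. Then for every ε ∈ (0,1), lim_{n→∞} (1/n) · D_H^ε(r^{⊗n} ‖ g^{⊗n}) = D(r ‖ g). -/
open Finset Real Filter

lemma master (n d : ℕ) (r : Fin d → ℝ) (hr1 : ∑ i, r i = 1)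
    (s : Finset (Fin n)) (φ : Fin d → ℝ) :
    ∑ f : Fin n → Fin d, (∏ j, r (f j)) * ∏ j ∈ s, φ (f j)
      = ∏ _j ∈ s, ∑ i, r i * φ i := by
  calc ∑ f : Fin n → Fin d, (∏ j, r (f j)) * ∏ j ∈ s, φ (f j)
      = ∑ f : Fin n → Fin d, ∏ j, (r (f j) * (if j ∈ s then φ (f j) else 1)) := by
        refine Finset.sum_congr rfl fun f _ => ?_
        rw [Finset.prod_mul_distrib, Finset.prod_ite_mem, Finset.univ_inter]
    _ = ∏ j : Fin n, ∑ i, r i * (if j ∈ s then φ i else 1) := by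
        rw [Finset.prod_univ_sum, Fintype.piFinset_univ]
    _ = ∏ j : Fin n, (if j ∈ s then ∑ i, r i * φ i else 1) := by
        refine Finset.prod_congr rfl fun j _ => ?_
        split_ifs <;> simp [hr1]
    _ = ∏ _j ∈ s, ∑ i, r i * φ i := by
        rw [Finset.prod_ite_mem, Finset.univ_inter]

lemma sum_tensPow (n d : ℕ) (r : Fin d → ℝ) (hr1 : ∑ i, r i = 1) :
    ∑ f : Fin n → Fin d, tensPow r n f = 1 := by
  have := master n d r hr1 ∅ (fun _ => 1)
  simpa [tensPow] using this

lemma tensPow_nonneg {n d : ℕ} {r : Fin d → ℝ} (hr : ∀ i, 0 ≤ r i) (f : Fin n → Fin d) :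
    0 ≤ tensPow r n f := Finset.prod_nonneg fun k _ => hr (f k)

lemma mean_lemma (n d : ℕ) (r : Fin d → ℝ) (hr1 : ∑ i, r i = 1) (Y : Fin d → ℝ) :
    ∑ f : Fin n → Fin d, tensPow r n f * (∑ k, Y (f k)) = n * ∑ i, r i * Y i := by
  have key : ∀ k : Fin n, ∑ f : Fin n → Fin d, tensPow r n f * Y (f k) = ∑ i, r i * Y i := by
    intro k
    have := master n d r hr1 {k} Y
    simpa [tensPow] using this
  calc ∑ f : Fin n → Fin d, tensPow r n f * (∑ k, Y (f k))
      = ∑ f : Fin n → Fin d, ∑ k, tensPow r n f * Y (f k) := by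
        simp [Finset.mul_sum]
    _ = ∑ k : Fin n, ∑ f : Fin n → Fin d, tensPow r n f * Y (f k) := Finset.sum_comm
    _ = ∑ _k : Fin n, ∑ i, r i * Y i := by simp [key]
    _ = n * ∑ i, r i * Y i := by simp [mul_comm]

lemma var_lemma (n d : ℕ) (r : Fin d → ℝ) (hr1 : ∑ i, r i = 1) (Y : Fin d → ℝ)
    (hY0 : ∑ i, r i * Y i = 0) :
    ∑ f : Fin n → Fin d, tensPow r n f * (∑ k, Y (f k))^2 = n * ∑ i, r i * Y i^2 := by
  have key : ∀ k l : Fin n, ∑ f : Fin n → Fin d, tensPow r n f * (Y (f k) * Y (f l))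
      = if k = l then ∑ i, r i * Y i ^ 2 else 0 := by
    intro k l
    by_cases h : k = l
    · subst h
      have := master n d r hr1 {k} (fun i => Y i * Y i)
      simp only [if_pos rfl]
      simpa [tensPow, sq] using this
    · have := master n d r hr1 {k, l} Y
      simp only [Finset.prod_pair h] at this
      rw [hY0, mul_zero] at this
      simp only [if_neg h]
      simpa [tensPow] using this
  calc ∑ f : Fin n → Fin d, tensPow r n f * (∑ k, Y (f k))^2
      = ∑ f : Fin n → Fin d, ∑ k, ∑ l, tensPow r n f * (Y (f k) * Y (f l)) := by
        refine Finset.sum_congr rfl fun f _ => ?_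
        rw [sq, Finset.sum_mul_sum]
        simp [Finset.mul_sum]
    _ = ∑ k : Fin n, ∑ l : Fin n, ∑ f : Fin n → Fin d, tensPow r n f * (Y (f k) * Y (f l)) := by
        rw [Finset.sum_comm]
        exact Finset.sum_congr rfl fun k _ => Finset.sum_comm
    _ = ∑ k : Fin n, ∑ l : Fin n, (if k = l then ∑ i, r i * Y i ^ 2 else 0) := by
        simp [key]
    _ = n * ∑ i, r i * Y i^2 := by simp [mul_comm]

lemma cheb (n d : ℕ) (r : Fin d → ℝ) (hr0 : ∀ i, 0 ≤ r i) (hr1 : ∑ i, r i = 1)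
    (Y : Fin d → ℝ) (hY0 : ∑ i, r i * Y i = 0) (t : ℝ) (ht : 0 < t) :
    ∑ f ∈ Finset.univ.filter (fun f : Fin n → Fin d => t ≤ |∑ k, Y (f k)|), tensPow r n f
      ≤ (n * ∑ i, r i * Y i ^ 2) / t ^ 2 := by
  have h1 : ∀ f ∈ Finset.univ.filter (fun f : Fin n → Fin d => t ≤ |∑ k, Y (f k)|),
      tensPow r n f ≤ tensPow r n f * (∑ k, Y (f k)) ^ 2 / t ^ 2 := by
    intro f hf
    rw [Finset.mem_filter] at hf
    have ht2 : t ^ 2 ≤ (∑ k, Y (f k)) ^ 2 := by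
      have := pow_le_pow_left₀ ht.le hf.2 2
      rwa [sq_abs] at this
    rw [le_div_iff₀ (by positivity)]
    exact mul_le_mul_of_nonneg_left ht2 (tensPow_nonneg hr0 f)
  calc ∑ f ∈ Finset.univ.filter (fun f : Fin n → Fin d => t ≤ |∑ k, Y (f k)|), tensPow r n f
      ≤ ∑ f ∈ Finset.univ.filter (fun f : Fin n → Fin d => t ≤ |∑ k, Y (f k)|),
          tensPow r n f * (∑ k, Y (f k)) ^ 2 / t ^ 2 := Finset.sum_le_sum h1
    _ ≤ ∑ f : Fin n → Fin d, tensPow r n f * (∑ k, Y (f k)) ^ 2 / t ^ 2 := by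
        refine Finset.sum_le_sum_of_subset_of_nonneg (Finset.filter_subset _ _) ?_
        intro f _ _
        have := tensPow_nonneg hr0 (n := n) f
        positivity
    _ = (n * ∑ i, r i * Y i ^ 2) / t ^ 2 := by
        rw [← Finset.sum_div, var_lemma n d r hr1 Y hY0]

/-- Bad set : atypical sequences. -/
noncomputable def Bad (n d : ℕ) (r g : Fin d → ℝ) (δ : ℝ) : Finset (Fin n → Fin d) :=
  Finset.univ.filter (fun f =>
    (n : ℝ) * δ ≤ |∑ k, ((Real.log (r (f k)) - Real.log (g (f k))) - relEnt r g)|)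

lemma log_ratio (n d : ℕ) (r g : Fin d → ℝ) (hgpos : ∀ i, 0 < g i)
    (f : Fin n → Fin d) (hf : tensPow r n f ≠ 0) :
    Real.log (tensPow r n f) - Real.log (tensPow g n f)
      = ∑ k, (Real.log (r (f k)) - Real.log (g (f k))) := by
  have hrne : ∀ k, r (f k) ≠ 0 := by
    intro k hk
    exact hf (Finset.prod_eq_zero (Finset.mem_univ k) hk)
  unfold tensPow
  rw [Real.log_prod (fun k _ => hrne k),
    Real.log_prod (fun k _ => (hgpos (f k)).ne'),
    ← Finset.sum_sub_distrib]

lemma sum_shift (n d : ℕ) (r g : Fin d → ℝ) (f : Fin n → Fin d) :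
    ∑ k, ((Real.log (r (f k)) - Real.log (g (f k))) - relEnt r g)
      = (∑ k, (Real.log (r (f k)) - Real.log (g (f k)))) - (n : ℝ) * relEnt r g := by
  rw [Finset.sum_sub_distrib, Finset.sum_const, Finset.card_univ, Fintype.card_fin,
    nsmul_eq_mul]

lemma Bad_sum_le (n d : ℕ) (r g : Fin d → ℝ) (hr : IsProbVec r) (δ : ℝ) (hnδ : 0 < (n:ℝ) * δ) :
    ∑ f ∈ Bad n d r g δ, tensPow r n f
      ≤ ((n:ℝ) * ∑ i, r i * ((Real.log (r i) - Real.log (g i)) - relEnt r g) ^ 2)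
          / ((n:ℝ) * δ) ^ 2 := by
  have hY0 : ∑ i, r i * ((Real.log (r i) - Real.log (g i)) - relEnt r g) = 0 := by
    have : ∑ i, r i * ((Real.log (r i) - Real.log (g i)) - relEnt r g)
        = relEnt r g - (∑ i, r i) * relEnt r g := by
      rw [relEnt, Finset.sum_mul]
      rw [← Finset.sum_sub_distrib]
      exact Finset.sum_congr rfl fun i _ => by ring
    rw [this, hr.2, one_mul, sub_self]
  exact cheb n d r hr.1 hr.2 _ hY0 _ hnδ

lemma bEps_le_exp (n d : ℕ) (r g : Fin d → ℝ) (hr : IsProbVec r) (hgpos : ∀ i, 0 < g i)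
    (δ ε : ℝ) (hδ : 0 < δ) (hB : ∑ f ∈ Bad n d r g δ, tensPow r n f ≤ ε) :
    bEps ε (tensPow r n) (tensPow g n) ≤ Real.exp (-((n:ℝ) * (relEnt r g - δ))) := by
  set D := relEnt r g with hD
  set θ := (n:ℝ) * (D - δ) with hθ
  set A : Finset (Fin n → Fin d) :=
    Finset.univ.filter (fun f => Real.exp θ * tensPow g n f ≤ tensPow r n f) with hA
  set Q : (Fin n → Fin d) → ℝ := fun f => if f ∈ A then 1 else 0 with hQ
  have hQ01 : ∀ f, 0 ≤ Q f ∧ Q f ≤ 1 := by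
    intro f; constructor <;> simp only [hQ] <;> split_ifs <;> norm_num
  -- tail bound
  have htail : ∑ f ∈ Finset.univ.filter
      (fun f : Fin n → Fin d => ¬ (Real.exp θ * tensPow g n f ≤ tensPow r n f)),
      tensPow r n f ≤ ε := by
    refine le_trans ?_ hB
    rw [← Finset.sum_filter_ne_zero]
    refine Finset.sum_le_sum_of_subset_of_nonneg ?_
      (fun f _ _ => tensPow_nonneg hr.1 f)
    intro f hf
    rw [Finset.mem_filter, Finset.mem_filter] at hf
    have hPpos : 0 < tensPow r n f := lt_of_le_of_ne (tensPow_nonneg hr.1 f) (Ne.symm hf.2)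
    have hGpos : 0 < tensPow g n f := Finset.prod_pos fun k _ => hgpos (f k)
    have hlt : tensPow r n f < Real.exp θ * tensPow g n f := lt_of_not_ge hf.1.2
    have hlog : Real.log (tensPow r n f) < θ + Real.log (tensPow g n f) := by
      have := Real.log_lt_log hPpos hlt
      rwa [Real.log_mul (Real.exp_ne_zero θ) hGpos.ne', Real.log_exp] at this
    have hsum : ∑ k, (Real.log (r (f k)) - Real.log (g (f k))) < θ := by
      rw [← log_ratio n d r g hgpos f hf.2]; linarith
    rw [Bad, Finset.mem_filter]
    refine ⟨Finset.mem_univ f, ?_⟩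
    rw [sum_shift]
    have h1 : (∑ k, (Real.log (r (f k)) - Real.log (g (f k)))) - (n:ℝ) * D
        < -((n:ℝ) * δ) := by rw [hθ] at hsum; push_cast; nlinarith
    calc (n:ℝ) * δ ≤ -((∑ k, (Real.log (r (f k)) - Real.log (g (f k)))) - (n:ℝ) * D) := by
          linarith
      _ ≤ |(∑ k, (Real.log (r (f k)) - Real.log (g (f k)))) - (n:ℝ) * D| := neg_le_abs _
  -- the test value
  have hQr : ∑ f, Q f * tensPow r n f = ∑ f ∈ A, tensPow r n f := by
    simp [hQ, ite_mul, Finset.sum_ite_mem]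
  have hconstraint : 1 - ε ≤ ∑ f, Q f * tensPow r n f := by
    rw [hQr]
    have hsplit : (∑ f ∈ A, tensPow r n f)
        + ∑ f ∈ Finset.univ.filter
            (fun f : Fin n → Fin d => ¬ (Real.exp θ * tensPow g n f ≤ tensPow r n f)),
          tensPow r n f = 1 := by
      rw [hA, Finset.sum_filter_add_sum_filter_not]
      exact sum_tensPow n d r hr.2
    linarith
  have hQg : ∑ f, Q f * tensPow g n f ≤ Real.exp (-θ) := by
    have h1 : ∑ f, Q f * tensPow g n f = ∑ f ∈ A, tensPow g n f := by
      simp [hQ, ite_mul, Finset.sum_ite_mem]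
    rw [h1]
    have h2 : ∀ f ∈ A, tensPow g n f ≤ Real.exp (-θ) * tensPow r n f := by
      intro f hfA
      rw [hA, Finset.mem_filter] at hfA
      calc tensPow g n f = Real.exp (-θ) * (Real.exp θ * tensPow g n f) := by
            rw [← mul_assoc, ← Real.exp_add, neg_add_cancel, Real.exp_zero, one_mul]
        _ ≤ Real.exp (-θ) * tensPow r n f :=
            mul_le_mul_of_nonneg_left hfA.2 (Real.exp_pos _).le
    calc ∑ f ∈ A, tensPow g n f ≤ ∑ f ∈ A, Real.exp (-θ) * tensPow r n f :=
          Finset.sum_le_sum h2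
      _ = Real.exp (-θ) * ∑ f ∈ A, tensPow r n f := by rw [Finset.mul_sum]
      _ ≤ Real.exp (-θ) * 1 := by
          refine mul_le_mul_of_nonneg_left ?_ (Real.exp_pos _).le
          rw [← sum_tensPow n d r hr.2]
          exact Finset.sum_le_sum_of_subset_of_nonneg (Finset.subset_univ _)
            (fun f _ _ => tensPow_nonneg hr.1 f)
      _ = Real.exp (-θ) := mul_one _
  refine le_trans (csInf_le ?_ ?_) hQg
  · refine ⟨0, fun y hy => ?_⟩
    obtain ⟨Q', hQ'01, _, rfl⟩ := hy
    exact Finset.sum_nonneg fun f _ =>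
      mul_nonneg (hQ'01 f).1 (tensPow_nonneg (fun i => (hgpos i).le) f)
  · exact ⟨Q, hQ01, hconstraint, rfl⟩

lemma exp_le_bEps (n d : ℕ) (r g : Fin d → ℝ) (hr : IsProbVec r) (hg : IsProbVec g)
    (hgpos : ∀ i, 0 < g i) (δ ε c : ℝ) (hε : 0 ≤ ε)
    (hB : ∑ f ∈ Bad n d r g δ, tensPow r n f ≤ c) :
    Real.exp (-((n:ℝ) * (relEnt r g + δ))) * (1 - ε - c)
      ≤ bEps ε (tensPow r n) (tensPow g n) := by
  set D := relEnt r g with hD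
  set θ := (n:ℝ) * (D + δ) with hθ
  set C : Finset (Fin n → Fin d) :=
    Finset.univ.filter (fun f => tensPow r n f ≤ Real.exp θ * tensPow g n f) with hC
  -- complement of C is inside the bad set
  have hCc : ∀ f ∈ Finset.univ.filter
      (fun f : Fin n → Fin d => ¬ (tensPow r n f ≤ Real.exp θ * tensPow g n f)),
      f ∈ Bad n d r g δ := by
    intro f hf
    rw [Finset.mem_filter] at hf
    have hGpos : 0 < tensPow g n f := Finset.prod_pos fun k _ => hgpos (f k)
    have hlt : Real.exp θ * tensPow g n f < tensPow r n f := lt_of_not_ge hf.2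
    have hPpos : 0 < tensPow r n f := lt_trans (by positivity) hlt
    have hlog : θ + Real.log (tensPow g n f) < Real.log (tensPow r n f) := by
      have := Real.log_lt_log (by positivity) hlt
      rwa [Real.log_mul (Real.exp_ne_zero θ) hGpos.ne', Real.log_exp] at this
    have hsum : θ < ∑ k, (Real.log (r (f k)) - Real.log (g (f k))) := by
      rw [← log_ratio n d r g hgpos f hPpos.ne']; linarith
    rw [Bad, Finset.mem_filter]
    refine ⟨Finset.mem_univ f, ?_⟩
    rw [sum_shift]
    have h1 : (n:ℝ) * δ < (∑ k, (Real.log (r (f k)) - Real.log (g (f k)))) - (n:ℝ) * D := by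
      rw [hθ] at hsum; nlinarith
    exact le_trans h1.le (le_abs_self _)
  have hCcsum : ∑ f ∈ Finset.univ.filter
      (fun f : Fin n → Fin d => ¬ (tensPow r n f ≤ Real.exp θ * tensPow g n f)),
      tensPow r n f ≤ c := by
    refine le_trans (Finset.sum_le_sum_of_subset_of_nonneg hCc
      (fun f _ _ => tensPow_nonneg hr.1 f)) hB
  refine le_csInf ⟨∑ f, (1:ℝ) * tensPow g n f,
    fun _ => (1:ℝ), fun i => ⟨zero_le_one, le_refl 1⟩, ?_, rfl⟩ ?_
  · simp only [one_mul]
    rw [sum_tensPow n d r hr.2]; linarith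
  · rintro y ⟨Q, hQ01, hQr, rfl⟩
    have step1 : ∑ f ∈ C, Q f * tensPow g n f ≤ ∑ f, Q f * tensPow g n f := by
      refine Finset.sum_le_sum_of_subset_of_nonneg (Finset.subset_univ _) ?_
      intro f _ _
      exact mul_nonneg (hQ01 f).1 (tensPow_nonneg (fun i => (hgpos i).le) f)
    have step2 : ∀ f ∈ C, Real.exp (-θ) * (Q f * tensPow r n f) ≤ Q f * tensPow g n f := by
      intro f hfC
      rw [hC, Finset.mem_filter] at hfC
      have : Real.exp (-θ) * tensPow r n f ≤ tensPow g n f := by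
        calc Real.exp (-θ) * tensPow r n f
            ≤ Real.exp (-θ) * (Real.exp θ * tensPow g n f) :=
              mul_le_mul_of_nonneg_left hfC.2 (Real.exp_pos _).le
          _ = tensPow g n f := by
              rw [← mul_assoc, ← Real.exp_add, neg_add_cancel, Real.exp_zero, one_mul]
      calc Real.exp (-θ) * (Q f * tensPow r n f)
          = Q f * (Real.exp (-θ) * tensPow r n f) := by ring
        _ ≤ Q f * tensPow g n f := mul_le_mul_of_nonneg_left this (hQ01 f).1
    have step3 : 1 - ε - c ≤ ∑ f ∈ C, Q f * tensPow r n f := by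
      have hsplitQ : (∑ f ∈ C, Q f * tensPow r n f)
          + ∑ f ∈ Finset.univ.filter
              (fun f : Fin n → Fin d => ¬ (tensPow r n f ≤ Real.exp θ * tensPow g n f)),
            Q f * tensPow r n f = ∑ f, Q f * tensPow r n f := by
        rw [hC, Finset.sum_filter_add_sum_filter_not]
      have htail : ∑ f ∈ Finset.univ.filter
          (fun f : Fin n → Fin d => ¬ (tensPow r n f ≤ Real.exp θ * tensPow g n f)),
          Q f * tensPow r n f ≤ c := by
        refine le_trans (Finset.sum_le_sum fun f _ => ?_) hCcsum
        calc Q f * tensPow r n f ≤ 1 * tensPow r n f :=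
              mul_le_mul_of_nonneg_right (hQ01 f).2 (tensPow_nonneg hr.1 f)
          _ = tensPow r n f := one_mul _
      linarith
    calc Real.exp (-θ) * (1 - ε - c)
        ≤ Real.exp (-θ) * ∑ f ∈ C, Q f * tensPow r n f :=
          mul_le_mul_of_nonneg_left step3 (Real.exp_pos _).le
      _ = ∑ f ∈ C, Real.exp (-θ) * (Q f * tensPow r n f) := by rw [Finset.mul_sum]
      _ ≤ ∑ f ∈ C, Q f * tensPow g n f := Finset.sum_le_sum step2
      _ ≤ ∑ f, Q f * tensPow g n f := step1

/-- asymptotic equipartition for the hypothesis-testing relative entropy. -/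
theorem DH_aep {d : ℕ} (r g : Fin d → ℝ)
    (hr : IsProbVec r) (hg : IsProbVec g) (hgpos : ∀ i, 0 < g i) :
    ∀ ε ∈ Set.Ioo (0 : ℝ) 1,
      Tendsto (fun n : ℕ => (1 / (n : ℝ)) * DH ε (tensPow r n) (tensPow g n)) atTop
        (nhds (relEnt r g)) := by
  rintro ε ⟨hε0, hε1⟩
  rw [Metric.tendsto_atTop]
  intro η hη
  set D := relEnt r g with hD
  set δ := η / 3 with hδdef
  have hδ : 0 < δ := by positivity
  set V := ∑ i, r i * ((Real.log (r i) - Real.log (g i)) - D) ^ 2 with hV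
  have hV0 : 0 ≤ V := Finset.sum_nonneg fun i _ => mul_nonneg (hr.1 i) (sq_nonneg _)
  set m := min ε ((1 - ε) / 2) with hm
  have hm0 : 0 < m := lt_min hε0 (by linarith)
  set K := Real.log (2 / (1 - ε)) with hK
  have hK0 : 0 ≤ K := Real.log_nonneg ((one_le_div (by linarith)).2 (by linarith))
  obtain ⟨N, hN⟩ := exists_nat_gt (max 1 (max (V / (δ ^ 2 * m)) (K / δ)))
  refine ⟨N, fun n hn => ?_⟩
  have hnN : (N : ℝ) ≤ (n : ℝ) := Nat.cast_le.2 hn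
  have hn1 : (1 : ℝ) ≤ (n : ℝ) :=
    le_trans (le_trans (le_max_left _ _) hN.le) hnN
  have hn0 : (0 : ℝ) < (n : ℝ) := by linarith
  -- the bad-set bound
  have hbad : ∑ f ∈ Bad n d r g δ, tensPow r n f ≤ m := by
    refine le_trans (Bad_sum_le n d r g hr δ (by positivity)) ?_
    have hVn : V / (δ ^ 2 * m) < (n : ℝ) :=
      lt_of_le_of_lt (le_trans (le_max_left _ _) (le_max_right _ _)) (lt_of_lt_of_le hN hnN)
    have h2 : V ≤ (n : ℝ) * (δ ^ 2 * m) := by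
      rw [div_lt_iff₀ (by positivity)] at hVn
      linarith [hVn]
    rw [div_le_iff₀ (by positivity)]
    nlinarith only [h2, hn0, hδ, hm0, hV0]
  have hbadε : ∑ f ∈ Bad n d r g δ, tensPow r n f ≤ ε :=
    le_trans hbad (min_le_left _ _)
  -- upper and lower bounds on bEps
  have hupper := bEps_le_exp n d r g hr hgpos δ ε hδ hbadε
  have hlower := exp_le_bEps n d r g hr hg hgpos δ ε m hε0.le hbad
  have hmε : (1 - ε) / 2 ≤ 1 - ε - m := by
    have := min_le_right ε ((1 - ε) / 2)
    linarith
  have hLpos : 0 < Real.exp (-((n:ℝ) * (D + δ))) * (1 - ε - m) := by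
    have : 0 < 1 - ε - m := lt_of_lt_of_le (by linarith) hmε
    positivity
  have hbpos : 0 < bEps ε (tensPow r n) (tensPow g n) := lt_of_lt_of_le hLpos hlower
  -- translate to DH
  have hup : (n : ℝ) * (D - δ) ≤ DH ε (tensPow r n) (tensPow g n) := by
    have := Real.log_le_log hbpos hupper
    rw [Real.log_exp] at this
    rw [DH]
    linarith
  have hdown : DH ε (tensPow r n) (tensPow g n) ≤ (n : ℝ) * (D + δ) + K := by
    have h1 := Real.log_le_log hLpos hlower
    rw [Real.log_mul (Real.exp_ne_zero _) (by linarith [lt_of_lt_of_le (show (0:ℝ) < (1-ε)/2 by linarith) hmε] : (1 - ε - m) ≠ 0), Real.log_exp] at h1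
    have h2 : -K ≤ Real.log (1 - ε - m) := by
      have h3 : Real.log ((1 - ε) / 2) ≤ Real.log (1 - ε - m) :=
        Real.log_le_log (by linarith) hmε
      rw [show (1 - ε) / 2 = (2 / (1 - ε))⁻¹ from (inv_div 2 (1 - ε)).symm,
        Real.log_inv] at h3
      exact h3
    rw [DH]
    linarith
  -- wrap up
  have hKn : K / (n : ℝ) ≤ δ := by
    have h4 : K / δ < (n : ℝ) :=
      lt_of_le_of_lt (le_trans (le_max_right _ _) (le_max_right _ _)) (lt_of_lt_of_le hN hnN)
    rw [div_lt_iff₀ hδ] at h4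
    rw [div_le_iff₀ hn0]
    linarith only [h4, mul_comm (n : ℝ) δ]
  have e1 : D - δ ≤ DH ε (tensPow r n) (tensPow g n) / (n : ℝ) := by
    have h7 : ((n : ℝ) * (D - δ)) / (n : ℝ) ≤ DH ε (tensPow r n) (tensPow g n) / (n : ℝ) :=
      (div_le_div_iff_of_pos_right hn0).2 hup
    rwa [mul_div_cancel_left₀ _ hn0.ne'] at h7
  have e2 : DH ε (tensPow r n) (tensPow g n) / (n : ℝ) ≤ D + 2 * δ := by
    have h5 : DH ε (tensPow r n) (tensPow g n) / (n : ℝ) ≤ ((n : ℝ) * (D + δ) + K) / (n : ℝ) :=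
      (div_le_div_iff_of_pos_right hn0).2 hdown
    have h6 : ((n : ℝ) * (D + δ) + K) / (n : ℝ) = D + δ + K / (n : ℝ) := by
      rw [add_div, mul_div_cancel_left₀ _ hn0.ne']
    linarith only [h5, h6, hKn]
  rw [Real.dist_eq, one_div, inv_mul_eq_div, abs_lt]
  rw [hδdef] at e1 e2
  constructor <;> [linarith only [e1, hη]; linarith only [e2, hη]]
end

section
/- (One-shot work yield) Fix an inverse temperature β > 0, a strictly positive probability vector g on Fin d, a probability vector r on Fin d, and ε ∈ [0,1). Then the optimal ε-extractable work equals the hypothesis-testing relative entropy: W_gain^ε(r) = (1/β) · D_H^ε(r ‖ g). -/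
open Finset Real Filter

lemma bEps_bddBelow {d : ℕ} (ε : ℝ) (r g : Fin d → ℝ) (hg : IsProbVec g) :
    BddBelow {y | ∃ Q : Fin d → ℝ, (∀ i, 0 ≤ Q i ∧ Q i ≤ 1) ∧ 1 - ε ≤ ∑ i, Q i * r i ∧
      y = ∑ i, Q i * g i} := by
  refine ⟨0, fun y hy => ?_⟩
  obtain ⟨Q, hQ, -, rfl⟩ := hy
  exact Finset.sum_nonneg fun i _ => mul_nonneg (hQ i).1 (hg.1 i)

lemma bEps_le_of_extractable {d : ℕ} (β : ℝ) (hβ : 0 < β) (g r : Fin d → ℝ)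
    (hg : IsProbVec g) (hr : IsProbVec r) (ε W : ℝ)
    (h : ExtractableWork β g r ε W) : bEps ε r g ≤ Real.exp (-β * W) := by
  obtain ⟨hW, M, ⟨hMnn, hMcol⟩, hfix, hb⟩ := h
  obtain ⟨E, hEdef⟩ : ∃ E : ℝ, E = Real.exp (-β * W) := ⟨_, rfl⟩
  have hE : 0 < E := hEdef ▸ Real.exp_pos _
  have hE1 : (0:ℝ) < 1 + E := by linarith
  have hγ0 : gibbsBit β W 0 = 1 / (1 + E) := by rw [hEdef]; simp [gibbsBit]
  have hγ1 : gibbsBit β W 1 = 1 / (1 + E) * E := by rw [hEdef]; simp [gibbsBit]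
  set Q : Fin d → ℝ := fun i => ∑ j, M (j, 1) (i, 0) with hQdef
  have hQ0 : ∀ i, 0 ≤ Q i := fun i => Finset.sum_nonneg fun j _ => hMnn _ _
  have hQ1 : ∀ i, Q i ≤ 1 := by
    intro i
    have h1 := hMcol (i, 0)
    rw [Fintype.sum_prod_type] at h1
    have h2 : ∀ j : Fin d, ∑ l : Fin 2, M (j, l) (i, 0)
        = M (j, 0) (i, 0) + M (j, 1) (i, 0) := fun j => Fin.sum_univ_two _
    rw [Finset.sum_congr rfl fun j _ => h2 j, Finset.sum_add_distrib] at h1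
    have h3 : 0 ≤ ∑ j, M (j, 0) (i, 0) := Finset.sum_nonneg fun j _ => hMnn _ _
    rw [hQdef]
    linarith
  -- battery marginal components
  have hmv : ∀ (l : Fin 2) (j : Fin d), M.mulVec (tens r groundBit) (j, l)
      = ∑ i, M (j, l) (i, 0) * r i := by
    intro l j
    simp only [Matrix.mulVec, dotProduct]
    rw [Fintype.sum_prod_type]
    refine Finset.sum_congr rfl fun i _ => ?_
    rw [Fin.sum_univ_two]
    simp [tens, groundBit]
  have hb1 : ∑ j, M.mulVec (tens r groundBit) (j, (1:Fin 2)) = ∑ i, Q i * r i := by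
    rw [Finset.sum_congr rfl fun j _ => hmv 1 j, Finset.sum_comm]
    refine Finset.sum_congr rfl fun i _ => ?_
    rw [hQdef, Finset.sum_mul]
  have hb0nn : 0 ≤ ∑ j, M.mulVec (tens r groundBit) (j, (0:Fin 2)) := by
    refine Finset.sum_nonneg fun j _ => ?_
    rw [hmv 0 j]
    exact Finset.sum_nonneg fun i _ => mul_nonneg (hMnn _ _) (hr.1 i)
  have htot : (∑ j, M.mulVec (tens r groundBit) (j, (0:Fin 2)))
      + ∑ j, M.mulVec (tens r groundBit) (j, (1:Fin 2)) = 1 := by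
    have h1 : ∀ j : Fin d, M.mulVec (tens r groundBit) (j, (0:Fin 2))
        + M.mulVec (tens r groundBit) (j, (1:Fin 2))
        = ∑ q : Fin d × Fin 2, (M (j,0) q + M (j,1) q) * tens r groundBit q := by
      intro j
      simp only [Matrix.mulVec, dotProduct]
      rw [← Finset.sum_add_distrib]
      exact Finset.sum_congr rfl fun q _ => by ring
    rw [← Finset.sum_add_distrib, Finset.sum_congr rfl fun j _ => h1 j, Finset.sum_comm]
    have h2 : ∀ q : Fin d × Fin 2, ∑ j, (M (j,0) q + M (j,1) q) * tens r groundBit q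
        = tens r groundBit q := by
      intro q
      rw [← Finset.sum_mul]
      have h3 := hMcol q
      rw [Fintype.sum_prod_type] at h3
      have h4 : ∀ j : Fin d, ∑ l : Fin 2, M (j, l) q
          = M (j, 0) q + M (j, 1) q := fun j => Fin.sum_univ_two _
      rw [Finset.sum_congr rfl fun j _ => h4 j] at h3
      rw [h3, one_mul]
    rw [Finset.sum_congr rfl fun q _ => h2 q, Fintype.sum_prod_type]
    have h5 : ∀ i : Fin d, ∑ k : Fin 2, tens r groundBit (i, k) = r i := by
      intro i
      rw [Fin.sum_univ_two]
      simp [tens, groundBit]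
    rw [Finset.sum_congr rfl fun i _ => h5 i, hr.2]
  -- test power
  have hQr : 1 - ε ≤ ∑ i, Q i * r i := by
    rw [Fin.sum_univ_two] at hb
    simp only [excitedBit] at hb
    norm_num at hb
    rw [hb1] at hb htot
    rw [abs_of_nonneg hb0nn, abs_of_nonpos (by linarith)] at hb
    linarith
  -- Gibbs bound
  have hgibbs : ∑ i, Q i * g i ≤ E := by
    have h1 : ∀ j : Fin d, (∑ i, M (j, 1) (i, 0) * (g i * (1 / (1 + E))))
        ≤ g j * (1 / (1 + E) * E) := by
      intro j
      have h2 : M.mulVec (tens g (gibbsBit β W)) (j, 1) = tens g (gibbsBit β W) (j, 1) :=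
        congrFun hfix (j, 1)
      simp only [Matrix.mulVec, dotProduct] at h2
      rw [Fintype.sum_prod_type] at h2
      have h3 : ∀ i : Fin d, ∑ k : Fin 2, M (j, 1) (i, k) * tens g (gibbsBit β W) (i, k)
          = M (j, 1) (i, 0) * (g i * (1 / (1 + E)))
            + M (j, 1) (i, 1) * (g i * (1 / (1 + E) * E)) := by
        intro i
        rw [Fin.sum_univ_two]
        simp only [tens, hγ0, hγ1]
      rw [Finset.sum_congr rfl fun i _ => h3 i, Finset.sum_add_distrib] at h2
      have h4 : 0 ≤ ∑ i, M (j, 1) (i, 1) * (g i * (1 / (1 + E) * E)) :=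
        Finset.sum_nonneg fun i _ => mul_nonneg (hMnn _ _)
          (mul_nonneg (hg.1 i) (by positivity))
      have h5 : tens g (gibbsBit β W) (j, 1) = g j * (1 / (1 + E) * E) := by
        simp [tens, hγ1]
      rw [h5] at h2
      linarith
    have h6 : ∑ j, ∑ i, M (j, 1) (i, 0) * (g i * (1 / (1 + E)))
        ≤ ∑ j, g j * (1 / (1 + E) * E) := Finset.sum_le_sum fun j _ => h1 j
    rw [Finset.sum_comm] at h6
    have h7 : ∀ i : Fin d, ∑ j, M (j, 1) (i, 0) * (g i * (1 / (1 + E)))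
        = Q i * g i * (1 / (1 + E)) := by
      intro i
      rw [hQdef, Finset.sum_mul, Finset.sum_mul]
      exact Finset.sum_congr rfl fun j _ => by ring
    rw [Finset.sum_congr rfl fun i _ => h7 i, ← Finset.sum_mul, ← Finset.sum_mul, hg.2,
      one_mul] at h6
    have h8 : (0:ℝ) < 1 / (1 + E) := by positivity
    rw [mul_comm (1 / (1 + E)) E] at h6
    exact le_of_mul_le_mul_right h6 h8
  have hmem : (∑ i, Q i * g i) ∈ {y | ∃ Q' : Fin d → ℝ,
      (∀ i, 0 ≤ Q' i ∧ Q' i ≤ 1) ∧ 1 - ε ≤ ∑ i, Q' i * r i ∧ y = ∑ i, Q' i * g i} :=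
    ⟨Q, fun i => ⟨hQ0 i, hQ1 i⟩, hQr, rfl⟩
  calc bEps ε r g ≤ ∑ i, Q i * g i := csInf_le (bEps_bddBelow ε r g hg) hmem
    _ ≤ Real.exp (-β * W) := hEdef ▸ hgibbs

lemma extractable_of_test {d : ℕ} (β : ℝ) (hβ : 0 < β) (g r : Fin d → ℝ)
    (hg : IsProbVec g) (hr : IsProbVec r) (ε W : ℝ) (hW : 0 ≤ W)
    (Q : Fin d → ℝ) (hQ : ∀ i, 0 ≤ Q i ∧ Q i ≤ 1)
    (hQr : 1 - ε ≤ ∑ i, Q i * r i)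
    (hQg : ∑ i, Q i * g i ≤ Real.exp (-β * W)) :
    ExtractableWork β g r ε W := by
  obtain ⟨E, hEdef⟩ : ∃ E : ℝ, E = Real.exp (-β * W) := ⟨_, rfl⟩
  have hE : 0 < E := hEdef ▸ Real.exp_pos _
  have hE1 : (0:ℝ) < 1 + E := by linarith
  obtain ⟨c, hcdef⟩ : ∃ c : ℝ, c = ∑ i, Q i * g i := ⟨_, rfl⟩
  have hQg' : c ≤ E := by rw [hcdef, hEdef]; exact hQg
  have hc0 : 0 ≤ c := hcdef ▸ Finset.sum_nonneg fun i _ => mul_nonneg (hQ i).1 (hg.1 i)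
  obtain ⟨s, hsdef⟩ : ∃ s : ℝ, s = 1 - c / E := ⟨_, rfl⟩
  have hs0 : 0 ≤ s := by
    have : c / E ≤ 1 := (div_le_one hE).2 hQg'
    rw [hsdef]; linarith
  have hs1 : s ≤ 1 := by
    have : 0 ≤ c / E := div_nonneg hc0 hE.le
    rw [hsdef]; linarith
  obtain ⟨A, hAdef⟩ : ∃ A : Fin d × Fin 2 → ℝ,
      A = fun q => if q.2 = 0 then Q q.1 else s := ⟨_, rfl⟩
  have hA0 : ∀ q, 0 ≤ A q := by
    intro q; rw [hAdef]; dsimp only; split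
    · exact (hQ q.1).1
    · exact hs0
  have hA1 : ∀ q, A q ≤ 1 := by
    intro q; rw [hAdef]; dsimp only; split
    · exact (hQ q.1).2
    · exact hs1
  obtain ⟨M, hMdef⟩ : ∃ M : Matrix (Fin d × Fin 2) (Fin d × Fin 2) ℝ,
      M = fun p q => g p.1 * (if p.2 = (0 : Fin 2) then 1 - A q else A q) := ⟨_, rfl⟩
  have hM0 : ∀ j q, M (j, (0:Fin 2)) q = g j * (1 - A q) := by
    intro j q; rw [hMdef]; simp
  have hM1 : ∀ j q, M (j, (1:Fin 2)) q = g j * A q := by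
    intro j q; rw [hMdef]; simp
  have hγ0 : gibbsBit β W 0 = 1 / (1 + E) := by
    rw [hEdef]; simp [gibbsBit]
  have hγ1 : gibbsBit β W 1 = 1 / (1 + E) * E := by
    rw [hEdef]; simp [gibbsBit]
  have hA02 : ∀ i : Fin d, A (i, (0:Fin 2)) = Q i := by
    intro i; rw [hAdef]; simp
  have hA12 : ∀ i, A (i, (1:Fin 2)) = s := by
    intro i; rw [hAdef]; simp
  -- key sums
  have hSA : ∑ q : Fin d × Fin 2, A q * tens g (gibbsBit β W) q = 1 / (1 + E) * E := by
    rw [Fintype.sum_prod_type]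
    have h1 : ∀ i : Fin d, ∑ k : Fin 2, A (i, k) * tens g (gibbsBit β W) (i, k)
        = (Q i * g i) * (1 / (1 + E)) + (s * (1 / (1 + E) * E)) * g i := by
      intro i
      rw [Fin.sum_univ_two]
      rw [hA02 i, hA12 i]
      simp only [tens, hγ0, hγ1]
      ring
    rw [Finset.sum_congr rfl fun i _ => h1 i, Finset.sum_add_distrib]
    have h2 : ∑ i, (Q i * g i) * (1 / (1 + E)) = c * (1 / (1 + E)) := by
      rw [hcdef, Finset.sum_mul]
    have h3 : ∑ i, (s * (1 / (1 + E) * E)) * g i = s * (1 / (1 + E) * E) := by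
      rw [← Finset.mul_sum, hg.2, mul_one]
    rw [h2, h3, hsdef]
    field_simp
    ring
  have hSgγ : ∑ q : Fin d × Fin 2, tens g (gibbsBit β W) q = 1 := by
    rw [Fintype.sum_prod_type]
    have h1 : ∀ i : Fin d, ∑ k : Fin 2, tens g (gibbsBit β W) (i, k) = g i := by
      intro i
      rw [Fin.sum_univ_two]
      simp only [tens, hγ0, hγ1]
      field_simp
    rw [Finset.sum_congr rfl fun i _ => h1 i, hg.2]
  refine ⟨hW, M, ⟨?_, ?_⟩, ?_, ?_⟩
  · intro p q
    rw [hMdef]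
    exact mul_nonneg (hg.1 p.1) (by split <;> [linarith [hA1 q]; exact hA0 q])
  · intro q
    rw [Fintype.sum_prod_type]
    have h1 : ∀ j : Fin d, ∑ l : Fin 2, M (j, l) q = g j := by
      intro j
      rw [Fin.sum_univ_two, hM0, hM1]
      ring
    rw [Finset.sum_congr rfl fun j _ => h1 j, hg.2]
  · funext p
    obtain ⟨j, l⟩ := p
    have hmv : ∀ l' : Fin 2, M.mulVec (tens g (gibbsBit β W)) (j, l')
        = ∑ q : Fin d × Fin 2, M (j, l') q * tens g (gibbsBit β W) q := by
      intro l'; simp [Matrix.mulVec, dotProduct]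
    fin_cases l
    · show M.mulVec (tens g (gibbsBit β W)) (j, (0:Fin 2)) = tens g (gibbsBit β W) (j, (0:Fin 2))
      rw [hmv 0]
      have h1 : ∀ q : Fin d × Fin 2, M (j, (0:Fin 2)) q * tens g (gibbsBit β W) q
          = g j * (tens g (gibbsBit β W) q - A q * tens g (gibbsBit β W) q) := by
        intro q; rw [hM0]; ring
      rw [Finset.sum_congr rfl fun q _ => h1 q, ← Finset.mul_sum,
        Finset.sum_sub_distrib, hSgγ, hSA]
      show _ = g j * gibbsBit β W 0
      rw [hγ0]
      field_simp
      ring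
    · show M.mulVec (tens g (gibbsBit β W)) (j, (1:Fin 2)) = tens g (gibbsBit β W) (j, (1:Fin 2))
      rw [hmv 1]
      have h1 : ∀ q : Fin d × Fin 2, M (j, (1:Fin 2)) q * tens g (gibbsBit β W) q
          = g j * (A q * tens g (gibbsBit β W) q) := by
        intro q; rw [hM1]; ring
      rw [Finset.sum_congr rfl fun q _ => h1 q, ← Finset.mul_sum, hSA]
      show _ = g j * gibbsBit β W 1
      rw [hγ1]
  · -- battery marginal
    obtain ⟨q0, hq0def⟩ : ∃ q0 : ℝ, q0 = ∑ i, Q i * r i := ⟨_, rfl⟩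
    have hQr' : 1 - ε ≤ q0 := hq0def ▸ hQr
    have hq0le : q0 ≤ 1 := by
      rw [hq0def, ← hr.2]
      exact Finset.sum_le_sum fun i _ => mul_le_of_le_one_left (hr.1 i) (hQ i).2
    have hmv : ∀ (l : Fin 2) (j : Fin d), M.mulVec (tens r groundBit) (j, l)
        = ∑ i, M (j, l) (i, 0) * r i := by
      intro l j
      simp only [Matrix.mulVec, dotProduct]
      rw [Fintype.sum_prod_type]
      refine Finset.sum_congr rfl fun i _ => ?_
      rw [Fin.sum_univ_two]
      simp [tens, groundBit]
    have hb1 : ∑ j, M.mulVec (tens r groundBit) (j, (1 : Fin 2)) = q0 := by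
      rw [Finset.sum_congr rfl fun j _ => hmv 1 j]
      have h1 : ∀ j : Fin d, ∑ i, M (j, (1:Fin 2)) (i, 0) * r i = g j * q0 := by
        intro j
        have h2 : ∀ i : Fin d, M (j, (1:Fin 2)) (i, 0) * r i = g j * (Q i * r i) := by
          intro i
          rw [hM1, hA02 i]
          ring
        rw [Finset.sum_congr rfl fun i _ => h2 i, ← Finset.mul_sum, hq0def]
      rw [Finset.sum_congr rfl fun j _ => h1 j, ← Finset.sum_mul, hg.2, one_mul]
    have hb0 : ∑ j, M.mulVec (tens r groundBit) (j, (0 : Fin 2)) = 1 - q0 := by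
      rw [Finset.sum_congr rfl fun j _ => hmv 0 j]
      have h1 : ∀ j : Fin d, ∑ i, M (j, (0:Fin 2)) (i, 0) * r i = g j * (1 - q0) := by
        intro j
        have h2 : ∀ i : Fin d, M (j, (0:Fin 2)) (i, 0) * r i = g j * (r i - Q i * r i) := by
          intro i
          rw [hM0, hA02 i]
          ring
        rw [Finset.sum_congr rfl fun i _ => h2 i, ← Finset.mul_sum,
          Finset.sum_sub_distrib, hr.2, ← hq0def]
      rw [Finset.sum_congr rfl fun j _ => h1 j, ← Finset.sum_mul, hg.2, one_mul]
    rw [Fin.sum_univ_two, hb0, hb1]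
    simp only [excitedBit]
    norm_num
    rw [abs_of_nonneg (by linarith), abs_of_nonpos (by linarith)]
    linarith

/-- the one-shot ε-work yield equals the hypothesis-testing relative entropy
(divided by the inverse temperature). -/
theorem one_shot_work_yield {d : ℕ} (β : ℝ) (hβ : 0 < β)
    (g : Fin d → ℝ) (hg : IsProbVec g) (hgpos : ∀ i, 0 < g i)
    (r : Fin d → ℝ) (hr : IsProbVec r)
    (ε : ℝ) (hε : ε ∈ Set.Ico (0 : ℝ) 1) :
    Wgain β g r ε = (1 / β) * DH ε r g := by
  obtain ⟨hε0, hε1⟩ := hε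
  have hβ' : β ≠ 0 := ne_of_gt hβ
  -- the feasible-value set of the hypothesis test
  have hmem1 : (1:ℝ) ∈ {y | ∃ Q : Fin d → ℝ, (∀ i, 0 ≤ Q i ∧ Q i ≤ 1) ∧
      1 - ε ≤ ∑ i, Q i * r i ∧ y = ∑ i, Q i * g i} := by
    refine ⟨fun _ => 1, fun i => ⟨zero_le_one, le_refl 1⟩, ?_, ?_⟩
    · simp [hr.2]; linarith
    · simp [hg.2]
  have hbdd := bEps_bddBelow ε r g hg
  -- d > 0 and a positive lower bound on g
  have hd : 0 < d := by
    rcases Nat.eq_zero_or_pos d with h | h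
    · exfalso; have := hg.2; subst h; simp at this
    · exact h
  obtain ⟨i0, -, hmin⟩ := Finset.exists_min_image Finset.univ g ⟨⟨0, hd⟩, Finset.mem_univ _⟩
  have hm : 0 < g i0 := hgpos i0
  -- positivity of bEps
  have hlb : ∀ y ∈ {y | ∃ Q : Fin d → ℝ, (∀ i, 0 ≤ Q i ∧ Q i ≤ 1) ∧
      1 - ε ≤ ∑ i, Q i * r i ∧ y = ∑ i, Q i * g i}, g i0 * (1 - ε) ≤ y := by
    rintro y ⟨Q, hQ, hQr, rfl⟩
    have h1 : ∀ i, r i ≤ 1 := by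
      intro i
      rw [← hr.2]
      exact Finset.single_le_sum (fun i _ => hr.1 i) (Finset.mem_univ i)
    have h2 : ∑ i, Q i * r i ≤ ∑ i, Q i := by
      exact Finset.sum_le_sum fun i _ => mul_le_of_le_one_right (hQ i).1 (h1 i)
    have h3 : g i0 * ∑ i, Q i ≤ ∑ i, Q i * g i := by
      rw [Finset.mul_sum]
      exact Finset.sum_le_sum fun i _ => by
        have := hmin i (Finset.mem_univ i)
        nlinarith [(hQ i).1]
    nlinarith [hm]
  have hbpos : 0 < bEps ε r g := by
    have : g i0 * (1 - ε) ≤ bEps ε r g := le_csInf ⟨1, hmem1⟩ hlb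
    nlinarith
  have hble1 : bEps ε r g ≤ 1 := csInf_le hbdd hmem1
  -- the target value
  have hT : (1 / β) * DH ε r g = -(Real.log (bEps ε r g)) / β := by
    rw [DH]; ring
  have hT0 : 0 ≤ (1 / β) * DH ε r g := by
    rw [hT]
    have : Real.log (bEps ε r g) ≤ 0 := Real.log_nonpos hbpos.le hble1
    exact div_nonneg (by linarith) hβ.le
  have hexpT : Real.exp (-β * ((1 / β) * DH ε r g)) = bEps ε r g := by
    have : -β * ((1 / β) * DH ε r g) = Real.log (bEps ε r g) := by
      rw [DH]; field_simp
    rw [this, Real.exp_log hbpos]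
  -- zero is extractable
  have h0ext : ExtractableWork β g r ε 0 := by
    refine extractable_of_test β hβ g r hg hr ε 0 le_rfl (fun _ => 1)
      (fun i => ⟨zero_le_one, le_refl 1⟩) ?_ ?_
    · simp [hr.2]; linarith
    · simp [hg.2]
  rw [Wgain]
  refine csSup_eq_of_forall_le_of_forall_lt_exists_gt ⟨0, h0ext⟩ ?_ ?_
  · -- upper bound
    intro a ha
    have h1 := bEps_le_of_extractable β hβ g r hg hr ε a ha
    have h2 : Real.exp (-β * ((1 / β) * DH ε r g)) ≤ Real.exp (-β * a) := by
      rw [hexpT]; exact h1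
    have h3 := Real.exp_le_exp.mp h2
    nlinarith
  · -- approach from below
    intro w hw
    rcases lt_or_ge w 0 with hw0 | hw0
    · exact ⟨0, h0ext, hw0⟩
    · refine ⟨(w + (1 / β) * DH ε r g) / 2, ?_, by linarith⟩
      have hWnn : 0 ≤ (w + (1 / β) * DH ε r g) / 2 := by linarith
      have hlt : (w + (1 / β) * DH ε r g) / 2 < (1 / β) * DH ε r g := by linarith
      have hexp_lt : bEps ε r g < Real.exp (-β * ((w + (1 / β) * DH ε r g) / 2)) := by
        rw [← hexpT]
        apply Real.exp_lt_exp.mpr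
        nlinarith
      obtain ⟨y, hy, hylt⟩ := exists_lt_of_csInf_lt ⟨1, hmem1⟩ hexp_lt
      obtain ⟨Q, hQ, hQr, rfl⟩ := hy
      exact extractable_of_test β hβ g r hg hr ε _ hWnn Q hQ hQr hylt.le
end

section
/- (One-shot work cost) Fix an inverse temperature β > 0, a strictly positive probability vector g on Fin d, a probability vector r on Fin d, and ε ∈ (0,1). Then the one-shot work cost satisfies, for every δ ∈ (0, 1−ε]: (1/β) · (D_H^{1−ε−δ}(r ‖ g) − log(1/δ)) ≤ W_cost^ε(r), and moreover W_cost^ε(r) ≤ (1/β) · (D_H^{1−ε}(r ‖ g) − log((1−ε)/ε)). -/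
open Finset Real Filter

lemma bEps_le {ι : Type*} [Fintype ι] {η : ℝ} {r g : ι → ℝ} (hg : ∀ i, 0 ≤ g i)
    {Q : ι → ℝ} (hQ : ∀ i, 0 ≤ Q i ∧ Q i ≤ 1) (hfeas : 1 - η ≤ ∑ i, Q i * r i) :
    bEps η r g ≤ ∑ i, Q i * g i := by
  apply csInf_le
  · refine ⟨0, ?_⟩
    rintro y ⟨P, hP, -, rfl⟩
    exact Finset.sum_nonneg fun i _ => mul_nonneg (hP i).1 (hg i)
  · exact ⟨Q, hQ, hfeas, rfl⟩

lemma le_bEps {ι : Type*} [Fintype ι] {η t : ℝ} {r g : ι → ℝ} (hη : 0 ≤ η)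
    (hr1 : ∑ i, r i = 1)
    (h : ∀ Q : ι → ℝ, (∀ i, 0 ≤ Q i ∧ Q i ≤ 1) → 1 - η ≤ ∑ i, Q i * r i →
      t ≤ ∑ i, Q i * g i) : t ≤ bEps η r g := by
  apply le_csInf
  · exact ⟨∑ i, (1:ℝ) * g i, fun _ => 1, fun i => ⟨zero_le_one, le_rfl⟩,
      by simp [hr1]; linarith, rfl⟩
  · rintro y ⟨Q, hQ, hfeas, rfl⟩
    exact h Q hQ hfeas

lemma bEps_pos {d : ℕ} {r g : Fin d → ℝ} {η : ℝ} (hr : IsProbVec r) (hgpos : ∀ i, 0 < g i)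
    (hη0 : 0 ≤ η) (hη1 : η < 1) : 0 < bEps η r g := by
  have hne : Nonempty (Fin d) := by
    rcases Nat.eq_zero_or_pos d with h | h
    · subst h; have := hr.2; simp at this
    · exact ⟨⟨0, h⟩⟩
  obtain ⟨i0, -, hi0⟩ := Finset.exists_min_image Finset.univ g
    ⟨Classical.arbitrary _, Finset.mem_univ _⟩
  have h1 : 0 < (1 - η) * g i0 := mul_pos (by linarith) (hgpos i0)
  refine lt_of_lt_of_le h1 (le_bEps hη0 hr.2 ?_)
  intro Q hQ hfeas
  have c1 : ∑ i, Q i * r i ≤ ∑ i, Q i := by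
    apply Finset.sum_le_sum; intro i _
    have hri : r i ≤ 1 := by
      have := Finset.single_le_sum (f := r) (fun j _ => hr.1 j) (Finset.mem_univ i)
      rw [hr.2] at this; exact this
    nlinarith [(hQ i).1, hr.1 i]
  have c2 : ∑ i, Q i * g i0 ≤ ∑ i, Q i * g i := by
    apply Finset.sum_le_sum; intro i _
    exact mul_le_mul_of_nonneg_left (hi0 i (Finset.mem_univ i)) (hQ i).1
  rw [← Finset.sum_mul] at c2
  nlinarith [hgpos i0]

lemma bEps_le_eps {d : ℕ} {r g : Fin d → ℝ} {ε : ℝ} (hr : IsProbVec r) (hg : IsProbVec g)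
    (hε0 : 0 ≤ ε) (hε1 : ε ≤ 1) : bEps (1 - ε) r g ≤ ε := by
  have := bEps_le (η := 1 - ε) (r := r) (g := g) hg.1
    (Q := fun _ => ε) (fun i => ⟨hε0, hε1⟩)
    (by rw [← Finset.mul_sum, hr.2]; ring_nf; rfl)
  rwa [← Finset.mul_sum, hg.2, mul_one] at this

lemma m_le_eps {d : ℕ} {r g : Fin d → ℝ} {ε : ℝ} (hr : IsProbVec r) (hg : IsProbVec g)
    (hgpos : ∀ i, 0 < g i) (hε : ε ∈ Set.Ioo (0:ℝ) 1) :
    ∑ i, max (r i - (ε / ((1 - ε) * bEps (1 - ε) r g)) * g i) 0 ≤ ε := by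
  obtain ⟨hε0, hε1⟩ := hε
  set b := bEps (1 - ε) r g with hbdef
  have hb0 : 0 < b := bEps_pos hr hgpos (by linarith) (by linarith)
  set c := ε / ((1 - ε) * b) with hcdef
  have hc0 : 0 < c := div_pos hε0 (mul_pos (by linarith) hb0)
  by_contra hcon
  push_neg at hcon
  set m := ∑ i, max (r i - c * g i) 0 with hmdef
  have hm0 : 0 < m := lt_trans hε0 hcon
  set Q : Fin d → ℝ := fun i => (ε / m) * (max (r i - c * g i) 0 / r i) with hQdef
  have hQr : ∀ i, Q i * r i = (ε / m) * max (r i - c * g i) 0 := by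
    intro i
    rcases eq_or_lt_of_le (hr.1 i) with h | h
    · have : max (r i - c * g i) 0 = 0 := by
        rw [max_eq_right]; nlinarith [mul_nonneg hc0.le (hg.1 i)]
      rw [← h] at this ⊢; rw [this, mul_zero, mul_zero]
    · show (ε / m) * (max (r i - c * g i) 0 / r i) * r i = _; rw [mul_assoc, div_mul_cancel₀ _ h.ne']
  have hQbd : ∀ i, 0 ≤ Q i ∧ Q i ≤ 1 := by
    intro i
    constructor
    · exact mul_nonneg (div_nonneg hε0.le hm0.le)
        (div_nonneg (le_max_right _ _) (hr.1 i))
    · have h1 : ε / m ≤ 1 := by rw [div_le_one hm0]; linarith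
      have h2 : max (r i - c * g i) 0 / r i ≤ 1 := by
        rcases eq_or_lt_of_le (hr.1 i) with h | h
        · simp [← h]
        · rw [div_le_one h]
          have := mul_nonneg hc0.le (hg.1 i)
          rcases le_max_iff.mpr (Or.inr (le_refl (0:ℝ))) with _
          rcases max_cases (r i - c * g i) 0 with ⟨he, -⟩ | ⟨he, -⟩ <;> rw [he] <;> linarith
      calc Q i ≤ 1 * 1 :=
            mul_le_mul h1 h2 (div_nonneg (le_max_right _ _) (hr.1 i)) zero_le_one
        _ = 1 := mul_one 1
  have hfeas : 1 - (1 - ε) ≤ ∑ i, Q i * r i := by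
    rw [Finset.sum_congr rfl fun i _ => hQr i, ← Finset.mul_sum, ← hmdef,
      div_mul_cancel₀ _ hm0.ne']
    linarith
  have hval : ∑ i, Q i * g i ≤ ε / c := by
    have hptw : ∀ i, Q i * g i ≤ (ε / m) * (max (r i - c * g i) 0 / c) := by
      intro i
      rcases max_cases (r i - c * g i) (0:ℝ) with ⟨he, hge⟩ | ⟨he, hge⟩
      · -- r i - c g i ≥ 0, so r i ≥ c g i > 0
        have hgi := hgpos i
        have hri : 0 < r i := by nlinarith
        have key : (r i - c * g i) / r i * g i ≤ (r i - c * g i) / c := by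
          rw [div_mul_eq_mul_div, div_le_div_iff₀ hri hc0]
          nlinarith
        calc Q i * g i = (ε / m) * ((r i - c * g i) / r i * g i) := by
              rw [hQdef]; simp [he]; ring
          _ ≤ (ε / m) * ((r i - c * g i) / c) :=
              mul_le_mul_of_nonneg_left key (div_nonneg hε0.le hm0.le)
          _ = (ε / m) * (max (r i - c * g i) 0 / c) := by rw [he]
      · simp only [hQdef, he, zero_div, mul_zero, zero_mul]
        positivity
    calc ∑ i, Q i * g i ≤ ∑ i, (ε / m) * (max (r i - c * g i) 0 / c) :=
          Finset.sum_le_sum fun i _ => hptw i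
      _ = (ε / m) * (m / c) := by
          rw [← Finset.mul_sum, ← Finset.sum_div, ← hmdef]
      _ ≤ ε / c := by
          rw [div_mul_div_comm, mul_comm ε m, mul_div_mul_left _ _ hm0.ne']
  have hb_le : b ≤ ε / c := le_trans (bEps_le hg.1 hQbd hfeas) hval
  have : ε / c = (1 - ε) * b := by
    rw [hcdef]; field_simp
  rw [this] at hb_le
  nlinarith

lemma exists_rt {d : ℕ} {r g : Fin d → ℝ} {ε c : ℝ} (hr : IsProbVec r) (hg : IsProbVec g)
    (hε0 : 0 < ε) (hc1 : 1 < c) (hm : ∑ i, max (r i - c * g i) 0 ≤ ε) :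
    ∃ rt : Fin d → ℝ, IsProbVec rt ∧ (∀ i, rt i ≤ c * g i) ∧
      (1/2) * ∑ i, |rt i - r i| ≤ ε := by
  set m := ∑ i, max (r i - c * g i) 0 with hmdef
  have hm0 : 0 ≤ m := Finset.sum_nonneg fun i _ => le_max_right _ _
  set R := c - 1 + m with hRdef
  have hR0 : 0 < R := by linarith
  have hmin : ∀ i, min (r i) (c * g i) = r i - max (r i - c * g i) 0 := by
    intro i; rcases le_total (r i) (c * g i) with h | h
    · rw [min_eq_left h, max_eq_right (by linarith)]; ring
    · rw [min_eq_right h, max_eq_left (by linarith)]; ring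
  have hmax2 : ∀ i, max (c * g i - r i) 0 = c * g i - min (r i) (c * g i) := by
    intro i; rcases le_total (r i) (c * g i) with h | h
    · rw [min_eq_left h, max_eq_left (by linarith)]
    · rw [min_eq_right h, max_eq_right (by linarith)]; ring
  have hsum_min : ∑ i, min (r i) (c * g i) = 1 - m := by
    simp only [hmin]; rw [Finset.sum_sub_distrib, hr.2]
  have hsum_max2 : ∑ i, max (c * g i - r i) 0 = R := by
    simp only [hmax2]; rw [Finset.sum_sub_distrib, ← Finset.mul_sum, hg.2, hsum_min]; ring
  refine ⟨fun i => min (r i) (c * g i) + (m / R) * max (c * g i - r i) 0, ⟨?_, ?_⟩, ?_, ?_⟩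
  · intro i
    have h1 : 0 ≤ min (r i) (c * g i) :=
      le_min (hr.1 i) (mul_nonneg (by linarith) (hg.1 i))
    have h2 : 0 ≤ (m / R) * max (c * g i - r i) 0 :=
      mul_nonneg (div_nonneg hm0 hR0.le) (le_max_right _ _)
    linarith
  · rw [Finset.sum_add_distrib, ← Finset.mul_sum, hsum_max2, hsum_min,
      div_mul_cancel₀ _ hR0.ne']; ring
  · intro i
    have h2 : (m / R) * max (c * g i - r i) 0 ≤ max (c * g i - r i) 0 :=
      mul_le_of_le_one_left (le_max_right _ _) (by rw [div_le_one hR0]; linarith)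
    have := hmax2 i
    linarith
  · have hptw : ∀ i, |min (r i) (c * g i) + (m / R) * max (c * g i - r i) 0 - r i| ≤
        (m / R) * max (c * g i - r i) 0 + max (r i - c * g i) 0 := by
      intro i
      have h2 : 0 ≤ (m / R) * max (c * g i - r i) 0 :=
        mul_nonneg (div_nonneg hm0 hR0.le) (le_max_right _ _)
      have h3 : 0 ≤ max (r i - c * g i) 0 := le_max_right _ _
      have := hmin i
      rw [abs_le]; constructor <;> nlinarith
    have hsum : ∑ i, |min (r i) (c * g i) + (m / R) * max (c * g i - r i) 0 - r i| ≤
        ∑ i, ((m / R) * max (c * g i - r i) 0 + max (r i - c * g i) 0) :=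
      Finset.sum_le_sum fun i _ => hptw i
    rw [Finset.sum_add_distrib, ← Finset.mul_sum, hsum_max2,
      div_mul_cancel₀ _ hR0.ne'] at hsum
    linarith

lemma mulVec_expand {d : ℕ} (M : Matrix (Fin d × Fin 2) (Fin d × Fin 2) ℝ)
    (v : Fin d × Fin 2 → ℝ) (p : Fin d × Fin 2) :
    M.mulVec v p = (∑ j, M p (j,0) * v (j,0)) + ∑ j, M p (j,1) * v (j,1) := by
  simp [Matrix.mulVec, dotProduct, Fintype.sum_prod_type, Fin.sum_univ_two,
    Finset.sum_add_distrib]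

lemma formation_matrix {d : ℕ} {β W : ℝ} {g rt : Fin d → ℝ}
    (hg : IsProbVec g) (hgpos : ∀ i, 0 < g i) (hrt : IsProbVec rt)
    (hle : ∀ i, rt i ≤ Real.exp (β * W) * g i) :
    ∃ M : Matrix (Fin d × Fin 2) (Fin d × Fin 2) ℝ, ColStochastic M ∧
      M.mulVec (tens g (gibbsBit β W)) = tens g (gibbsBit β W) ∧
      M.mulVec (tens g excitedBit) = tens rt groundBit := by
  have h00 : ((0:Fin 2) = 0) = True := by simp
  have h10 : ((1:Fin 2) = 0) = False := by simp
  set c : ℝ := Real.exp (β * W) with hcdef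
  have hc0 : 0 < c := Real.exp_pos _
  have hE : Real.exp (-β * W) = 1 / c := by
    rw [hcdef, neg_mul, Real.exp_neg, one_div]
  set x : Fin d → ℝ := fun j => rt j / (c * g j) with hxdef
  have hx0 : ∀ j, 0 ≤ x j := fun j =>
    div_nonneg (hrt.1 j) (mul_nonneg hc0.le (hgpos j).le)
  have hx1 : ∀ j, x j ≤ 1 := fun j =>
    (div_le_one (mul_pos hc0 (hgpos j))).2 (hle j)
  have hxg : ∀ j, x j * (c * g j) = rt j := fun j =>
    div_mul_cancel₀ _ (mul_pos hc0 (hgpos j)).ne'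
  refine ⟨fun p q =>
    if q.2 = 0 then
      (if p.2 = 0 then (if p.1 = q.1 then 1 - x q.1 else 0) else x q.1 * g p.1)
    else (if p.2 = 0 then rt p.1 else 0), ⟨?_, ?_⟩, ?_, ?_⟩
  · rintro ⟨j, l⟩ ⟨i, k⟩
    dsimp only
    split_ifs with h1 h2 h3
    · linarith [hx1 i]
    · exact le_rfl
    · exact mul_nonneg (hx0 i) (hgpos j).le
    · exact hrt.1 j
    · exact le_rfl
  · rintro ⟨j, l⟩
    rw [Fintype.sum_prod_type, Finset.sum_comm, Fin.sum_univ_two]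
    have hl : l = 0 ∨ l = 1 := by omega
    rcases hl with h | h <;> subst h
    · simp only [h00, h10, if_true, if_false]
      rw [Finset.sum_ite_eq' Finset.univ j, if_pos (Finset.mem_univ j),
        ← Finset.mul_sum, hg.2]
      ring
    · simp only [h00, h10, if_true, if_false]
      rw [Finset.sum_const, hrt.2]
      simp
  · funext p
    obtain ⟨i, k⟩ := p
    refine (mulVec_expand _ _ _).trans ?_
    dsimp only
    simp only [tens, gibbsBit, hE, h00, h10, if_true, if_false]
    have hk : k = 0 ∨ k = 1 := by omega
    rcases hk with h | h <;> subst h <;>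
      simp only [h00, h10, if_true, if_false]
    · have e1 : ∑ j, (if i = j then 1 - x j else 0) * (g j * (1 / (1 + 1 / c) * 1))
          = (1 - x i) * (g i * (1 / (1 + 1 / c) * 1)) := by
        rw [Finset.sum_eq_single i]
        · simp
        · intro j _ hj; rw [if_neg (fun hh => hj hh.symm), zero_mul]
        · intro h; exact absurd (Finset.mem_univ i) h
      have e2 : ∑ j, rt i * (g j * (1 / (1 + 1 / c) * (1 / c)))
          = rt i * (1 / (1 + 1 / c) * (1 / c)) := by
        rw [← Finset.mul_sum, ← Finset.sum_mul, hg.2, one_mul]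
      rw [e1, e2, ← hxg i]
      have hgi := (hgpos i).ne'
      have hden : (1 + 1 / c) ≠ 0 := by positivity
      field_simp
      ring
    · have key : ∀ j, x j * g i * (g j * (1 / (1 + 1 / c) * 1))
          = (g i * (1 / (1 + 1 / c) * (1 / c))) * rt j := by
        intro j
        rw [← hxg j]
        have hgj := (hgpos j).ne'
        have hden : (1 + 1 / c) ≠ 0 := by positivity
        field_simp
      rw [Finset.sum_congr rfl (fun j _ => key j), ← Finset.mul_sum, hrt.2, mul_one]
      simp
  · funext p
    obtain ⟨i, k⟩ := p
    refine (mulVec_expand _ _ _).trans ?_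
    dsimp only
    simp only [tens, excitedBit, groundBit, h00, h10, if_true, if_false]
    have hk : k = 0 ∨ k = 1 := by omega
    rcases hk with h | h <;> subst h <;>
      simp only [h00, h10, if_true, if_false, mul_zero, zero_mul, mul_one,
        Finset.sum_const_zero, zero_add, add_zero]
    rw [← Finset.mul_sum, hg.2, mul_one]

lemma sum_expand {d : ℕ} (f : Fin d × Fin 2 → ℝ) :
    ∑ p, f p = (∑ j, f (j,0)) + ∑ j, f (j,1) := by
  simp [Fintype.sum_prod_type, Fin.sum_univ_two, Finset.sum_add_distrib]

lemma lower_core {d : ℕ} {β W ε δ : ℝ} {g r : Fin d → ℝ}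
    (hr : IsProbVec r) (hg : IsProbVec g)
    (hδ0 : 0 < δ) (hsum : ε + δ ≤ 1) (hε0 : 0 < ε)
    (hF : FormationWork β g r ε W) :
    δ * Real.exp (-β * W) ≤ bEps (1 - ε - δ) r g := by
  have h00 : ((0:Fin 2) = 0) = True := by simp
  have h10 : ((1:Fin 2) = 0) = False := by simp
  obtain ⟨hW, M, rt, hM, hfix, hrt, hclose, hmap⟩ := hF
  have hE0 : 0 < Real.exp (-β * W) := Real.exp_pos _
  set E : ℝ := Real.exp (-β * W) with hEdef
  have hγ0 : 0 < 1 / (1 + E) := by positivity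
  apply le_bEps (by linarith) hr.2
  intro Q hQ hfeas
  -- Step 1: ∑ Q rt ≥ δ
  have hQrt : δ ≤ ∑ i, Q i * rt i := by
    have hptw : ∀ i, Q i * (r i - rt i) ≤ (|rt i - r i| + (r i - rt i)) / 2 := by
      intro i
      rcases le_or_gt 0 (r i - rt i) with h | h
      · rw [abs_sub_comm, abs_of_nonneg h]
        nlinarith [(hQ i).2, (hQ i).1]
      · rw [abs_sub_comm, abs_of_neg h]
        nlinarith [(hQ i).1, (hQ i).2]
    have h1 : ∑ i, Q i * (r i - rt i) ≤ ∑ i, (|rt i - r i| + (r i - rt i)) / 2 :=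
      Finset.sum_le_sum fun i _ => hptw i
    have h2 : ∑ i, (|rt i - r i| + (r i - rt i)) / 2
        = ((∑ i, |rt i - r i|) + ∑ i, (r i - rt i)) / 2 := by
      rw [← Finset.sum_div, ← Finset.sum_add_distrib]
    have h3 : ∑ i, (r i - rt i) = 0 := by
      rw [Finset.sum_sub_distrib, hr.2, hrt.2]; ring
    have h4 : ∑ i, Q i * rt i = (∑ i, Q i * r i) - ∑ i, Q i * (r i - rt i) := by
      rw [← Finset.sum_sub_distrib]
      exact Finset.sum_congr rfl fun i _ => by ring
    rw [h4]
    have := hclose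
    linarith
  -- Step 2: pull back through M
  set Qt : Fin d × Fin 2 → ℝ := fun p => if p.2 = 0 then Q p.1 else 0 with hQtdef
  set Q' : Fin d × Fin 2 → ℝ := fun q => ∑ p, M p q * Qt p with hQ'def
  have hQ'0 : ∀ q, 0 ≤ Q' q := by
    intro q
    apply Finset.sum_nonneg
    intro p _
    apply mul_nonneg (hM.1 p q)
    rw [hQtdef]
    dsimp only
    split_ifs
    · exact (hQ p.1).1
    · exact le_rfl
  have swap : ∀ v : Fin d × Fin 2 → ℝ,
      ∑ q, Q' q * v q = ∑ p, Qt p * M.mulVec v p := by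
    intro v
    simp only [hQ'def, Matrix.mulVec, dotProduct, Finset.sum_mul, Finset.mul_sum]
    rw [Finset.sum_comm]
    exact Finset.sum_congr rfl fun p _ => Finset.sum_congr rfl fun q _ => by ring
  have hB : ∑ q, Q' q * tens g excitedBit q = ∑ i, Q i * rt i := by
    rw [swap, hmap, sum_expand (fun p => Qt p * tens rt groundBit p)]
    simp only [hQtdef, tens, groundBit, h00, h10, if_true, if_false,
      mul_zero, zero_mul, mul_one, Finset.sum_const_zero, add_zero]
  have hA : ∑ q, Q' q * tens g (gibbsBit β W) q
      = (1 / (1 + E)) * ∑ i, Q i * g i := by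
    rw [swap, hfix, sum_expand (fun p => Qt p * tens g (gibbsBit β W) p)]
    simp only [hQtdef, tens, gibbsBit, h00, h10, if_true, if_false,
      mul_zero, zero_mul, mul_one, Finset.sum_const_zero, add_zero, ← hEdef]
    rw [Finset.mul_sum]
    exact Finset.sum_congr rfl fun i _ => by ring
  have hAB : (1 / (1 + E)) * E * (∑ q, Q' q * tens g excitedBit q)
      ≤ ∑ q, Q' q * tens g (gibbsBit β W) q := by
    rw [sum_expand (fun q => Q' q * tens g excitedBit q),
      sum_expand (fun q => Q' q * tens g (gibbsBit β W) q)]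
    simp only [tens, excitedBit, gibbsBit, h00, h10, if_true, if_false,
      mul_zero, zero_mul, mul_one, Finset.sum_const_zero, zero_add, ← hEdef]
    have t1 : 0 ≤ ∑ j, Q' (j, 0) * (g j * (1 / (1 + E))) := by
      apply Finset.sum_nonneg
      intro j _
      exact mul_nonneg (hQ'0 _) (mul_nonneg (hg.1 j) (by positivity))
    have t2 : (1 / (1 + E)) * E * ∑ j, Q' (j, 1) * g j
        = ∑ j, Q' (j, 1) * (g j * (1 / (1 + E) * E)) := by
      rw [Finset.mul_sum]
      exact Finset.sum_congr rfl fun j _ => by ring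
    linarith
  rw [hA, hB] at hAB
  have key : δ * E * (1 / (1 + E)) ≤ (∑ i, Q i * g i) * (1 / (1 + E)) := by
    calc δ * E * (1 / (1 + E)) = (1 / (1 + E)) * E * δ := by ring
      _ ≤ (1 / (1 + E)) * E * ∑ i, Q i * rt i :=
          mul_le_mul_of_nonneg_left hQrt (by positivity)
      _ ≤ (1 / (1 + E)) * ∑ i, Q i * g i := hAB
      _ = (∑ i, Q i * g i) * (1 / (1 + E)) := by ring
  exact le_of_mul_le_mul_right key hγ0

/-- one-shot bounds on the ε-work cost. -/
theorem one_shot_work_cost {d : ℕ} (β : ℝ) (hβ : 0 < β)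
    (g : Fin d → ℝ) (hg : IsProbVec g) (hgpos : ∀ i, 0 < g i)
    (r : Fin d → ℝ) (hr : IsProbVec r)
    (ε : ℝ) (hε : ε ∈ Set.Ioo (0 : ℝ) 1) :
    (∀ δ ∈ Set.Ioc (0 : ℝ) (1 - ε),
      (1 / β) * (DH (1 - ε - δ) r g - Real.log (1 / δ)) ≤ Wcost β g r ε) ∧
    Wcost β g r ε ≤ (1 / β) * (DH (1 - ε) r g - Real.log ((1 - ε) / ε)) := by
  obtain ⟨hε0, hε1⟩ := hε
  have hb0 : 0 < bEps (1 - ε) r g := bEps_pos hr hgpos (by linarith) (by linarith)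
  have hbε : bEps (1 - ε) r g ≤ ε := bEps_le_eps hr hg hε0.le hε1.le
  have hc1 : 1 < ε / ((1 - ε) * bEps (1 - ε) r g) := by
    rw [lt_div_iff₀ (by nlinarith)]
    nlinarith
  have hc0 : 0 < ε / ((1 - ε) * bEps (1 - ε) r g) := by positivity
  have hm := m_le_eps hr hg hgpos ⟨hε0, hε1⟩
  obtain ⟨rt, hrt, hrtle, hrtclose⟩ := exists_rt hr hg hε0 hc1 hm
  set W₀ : ℝ := (1 / β) * Real.log (ε / ((1 - ε) * bEps (1 - ε) r g)) with hW₀def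
  have hW₀0 : 0 ≤ W₀ := mul_nonneg (by positivity) (Real.log_nonneg hc1.le)
  have hexp : Real.exp (β * W₀) = ε / ((1 - ε) * bEps (1 - ε) r g) := by
    rw [hW₀def, ← mul_assoc, mul_one_div, div_self hβ.ne', one_mul, Real.exp_log hc0]
  obtain ⟨M, hM, hfix, hmap⟩ := formation_matrix hg hgpos hrt (fun i => by
    rw [hexp]; exact hrtle i)
  have hF : FormationWork β g r ε W₀ := ⟨hW₀0, M, rt, hM, hfix, hrt, hrtclose, hmap⟩
  have hFmem : W₀ ∈ {W : ℝ | FormationWork β g r ε W} := hF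
  have hW₀val : W₀ = (1 / β) * (DH (1 - ε) r g - Real.log ((1 - ε) / ε)) := by
    have h1 : Real.log (ε / ((1 - ε) * bEps (1 - ε) r g))
        = Real.log ε - (Real.log (1 - ε) + Real.log (bEps (1 - ε) r g)) := by
      rw [Real.log_div hε0.ne' (mul_pos (by linarith : (0:ℝ) < 1 - ε) hb0).ne',
        Real.log_mul (by linarith : (0:ℝ) < 1 - ε).ne' hb0.ne']
    have h2 : Real.log ((1 - ε) / ε) = Real.log (1 - ε) - Real.log ε :=
      Real.log_div (by linarith : (0:ℝ) < 1 - ε).ne' hε0.ne'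
    rw [hW₀def, h1, DH, h2]
    ring
  constructor
  · intro δ hδ
    obtain ⟨hδ0, hδle⟩ := hδ
    apply le_csInf ⟨W₀, hFmem⟩
    intro W hW
    have hcore : δ * Real.exp (-β * W) ≤ bEps (1 - ε - δ) r g :=
      lower_core hr hg hδ0 (by linarith) hε0 hW
    have hpos : (0:ℝ) < δ * Real.exp (-β * W) := by positivity
    have h1 : Real.log (δ * Real.exp (-β * W)) ≤ Real.log (bEps (1 - ε - δ) r g) :=
      Real.log_le_log hpos hcore
    have h2 : Real.log (δ * Real.exp (-β * W)) = Real.log δ + (-β * W) := by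
      rw [Real.log_mul hδ0.ne' (Real.exp_ne_zero _), Real.log_exp]
    have h3 : DH (1 - ε - δ) r g - Real.log (1 / δ) ≤ β * W := by
      rw [DH, one_div, Real.log_inv]
      linarith
    calc (1 / β) * (DH (1 - ε - δ) r g - Real.log (1 / δ))
        ≤ (1 / β) * (β * W) :=
          mul_le_mul_of_nonneg_left h3 (by positivity)
      _ = W := by field_simp
  · have hle : Wcost β g r ε ≤ W₀ :=
      csInf_le ⟨0, fun W hW => hW.1⟩ hFmem
    rwa [hW₀val] at hle
end
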